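/- arXiv:2202.02853 — 6 statements merged into one kernel-verified Lean document; each statement's English description precedes it below -/
import Mathlib

section
/- Let a, b ∈ ℝ with b² ≠ 1 and let n ≥ 1. Let A and B be the n×n matrices with entries A_{ij} = a^{|i−j|} and B_{ij} = b^{|i−j|} (indices 1 ≤ i, j ≤ n). Then B is invertible and tr(B⁻¹·A) = ( (n−2)·b² − 2(n−1)·a·b + n ) / (1 − b²). -/
open Matrix Finset

private def dval (b : ℝ) (n j : ℕ) : ℝ := if j = 0 ∨ j = n - 1 then 1 else 1 + b ^ 2

private def cnum (b : ℝ) (n k j : ℕ) : ℝ :=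
  (if k = j then dval b n j else 0) + (if k + 1 = j then -b else 0) +
    (if k = j + 1 then -b else 0)

private lemma dist_eq (x y v : ℕ) (h : (x - y) + (y - x) = v) : Nat.dist x y = v := by
  unfold Nat.dist; omega

private lemma key (b : ℝ) (n : ℕ) (hn : 2 ≤ n) (i j : ℕ) (hi : i < n) (hj : j < n) :
    (∑ k ∈ Finset.range n, b ^ (Nat.dist i k) * cnum b n k j)
      = if i = j then 1 - b ^ 2 else 0 := by
  unfold cnum
  simp only [mul_add, Finset.sum_add_distrib, mul_ite, mul_zero]
  rw [Finset.sum_ite_eq' (Finset.range n) j, if_pos (Finset.mem_range.2 hj),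
    Finset.sum_ite_eq' (Finset.range n) (j + 1)]
  have h2 : (∑ k ∈ Finset.range n, if k + 1 = j then b ^ Nat.dist i k * (-b) else 0)
      = if 1 ≤ j then b ^ Nat.dist i (j - 1) * (-b) else 0 := by
    rcases j with _ | j'
    · simp
    · simp only [Nat.add_right_cancel_iff]
      rw [Finset.sum_ite_eq' (Finset.range n) j']
      have : j' ∈ Finset.range n := Finset.mem_range.2 (by omega)
      simp [this]
  rw [h2]
  simp only [Finset.mem_range]
  unfold dval
  rcases Nat.eq_zero_or_pos j with rfl | hj1
  · -- j = 0
    rw [if_pos (show (0 : ℕ) = 0 ∨ 0 = n - 1 from Or.inl rfl),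
      if_neg (show ¬(1 ≤ 0) by omega), if_pos (show 0 + 1 < n by omega)]
    rcases Nat.eq_zero_or_pos i with rfl | hi1
    · rw [if_pos rfl, dist_eq 0 0 0 (by omega), dist_eq 0 (0 + 1) 1 (by omega)]; ring
    · rw [if_neg (show i ≠ 0 by omega), dist_eq i 0 i (by omega),
        dist_eq i (0 + 1) (i - 1) (by omega)]
      have : b ^ i = b ^ ((i - 1) + 1) := by congr 1; omega
      rw [this]; ring
  · rcases eq_or_lt_of_le (show j + 1 ≤ n by omega) with hjn | hjn
    · -- j = n - 1
      rw [if_pos (Or.inr (show j = n - 1 by omega)), if_pos (show 1 ≤ j by omega),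
        if_neg (show ¬(j + 1 < n) by omega)]
      rcases eq_or_lt_of_le (show i ≤ j by omega) with rfl | hij
      · rw [if_pos rfl, dist_eq i i 0 (by omega), dist_eq i (i - 1) 1 (by omega)]; ring
      · rw [if_neg (show i ≠ j by omega), dist_eq i j ((j - 1 - i) + 1) (by omega),
          dist_eq i (j - 1) (j - 1 - i) (by omega)]
        ring
    · -- interior j
      rw [if_neg (show ¬(j = 0 ∨ j = n - 1) by omega), if_pos (show 1 ≤ j by omega),
        if_pos hjn]
      rcases lt_trichotomy i j with hij | rfl | hij
      · rw [if_neg (show i ≠ j by omega), dist_eq i j ((j - 1 - i) + 1) (by omega),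
          dist_eq i (j - 1) (j - 1 - i) (by omega),
          dist_eq i (j + 1) ((j - 1 - i) + 2) (by omega)]
        ring
      · rw [if_pos rfl, dist_eq i i 0 (by omega), dist_eq i (i - 1) 1 (by omega),
          dist_eq i (i + 1) 1 (by omega)]; ring
      · rw [if_neg (show i ≠ j by omega), dist_eq i j ((i - (j + 1)) + 1) (by omega),
          dist_eq i (j - 1) ((i - (j + 1)) + 2) (by omega),
          dist_eq i (j + 1) (i - (j + 1)) (by omega)]
        ring

private lemma inner_tr (a b : ℝ) (n i : ℕ) (hi : i < n) :
    (∑ k ∈ Finset.range n, cnum b n i k * a ^ Nat.dist k i)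
      = dval b n i + (if i + 1 < n then -(b * a) else 0)
        + (if 1 ≤ i then -(b * a) else 0) := by
  unfold cnum
  simp only [add_mul, Finset.sum_add_distrib, ite_mul, zero_mul]
  rw [Finset.sum_ite_eq (Finset.range n) i, if_pos (Finset.mem_range.2 hi),
    Finset.sum_ite_eq (Finset.range n) (i + 1)]
  have h3 : (∑ k ∈ Finset.range n, if i = k + 1 then -b * a ^ Nat.dist k i else 0)
      = if 1 ≤ i then -(b * a) else 0 := by
    rcases i with _ | i'
    · simp
    · simp only [Nat.add_right_cancel_iff]
      rw [Finset.sum_ite_eq (Finset.range n) i']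
      have hm : i' ∈ Finset.range n := Finset.mem_range.2 (by omega)
      rw [if_pos hm, if_pos (show 1 ≤ i' + 1 by omega), dist_eq i' (i' + 1) 1 (by omega)]
      ring
  rw [h3, dist_eq i i 0 (by omega)]
  simp only [Finset.mem_range]
  rcases lt_or_ge (i + 1) n with h | h
  · rw [if_pos h, if_pos h, dist_eq (i + 1) i 1 (by omega)]
    ring
  · rw [if_neg (show ¬(i + 1 < n) by omega), if_neg (show ¬(i + 1 < n) by omega)]
    ring

private lemma sum_dval (b : ℝ) (n : ℕ) (hn : 2 ≤ n) :
    (∑ i ∈ Finset.range n, dval b n i) = (n : ℝ) * (1 + b ^ 2) - 2 * b ^ 2 := by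
  have hrw : ∀ i ∈ Finset.range n, dval b n i
      = (1 + b ^ 2) + ((if i = 0 then -b ^ 2 else 0) + (if i = n - 1 then -b ^ 2 else 0)) := by
    intro i _
    unfold dval
    by_cases h0 : i = 0
    · rw [if_pos (Or.inl h0), if_pos h0, if_neg (show ¬(i = n - 1) by omega)]; ring
    · by_cases h1 : i = n - 1
      · rw [if_pos (Or.inr h1), if_neg h0, if_pos h1]; ring
      · rw [if_neg (by tauto), if_neg h0, if_neg h1]; ring
  rw [Finset.sum_congr rfl hrw]
  simp only [Finset.sum_add_distrib, Finset.sum_const, Finset.card_range,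
    Finset.sum_ite_eq', Finset.mem_range, nsmul_eq_mul]
  rw [if_pos (show 0 < n by omega), if_pos (show n - 1 < n by omega)]
  ring

private lemma sum_if_lt (x : ℝ) (n : ℕ) (hn : 1 ≤ n) :
    (∑ i ∈ Finset.range n, if i + 1 < n then x else 0) = ((n : ℝ) - 1) * x := by
  have hrw : ∀ i ∈ Finset.range n, (if i + 1 < n then x else 0)
      = x - (if i = n - 1 then x else 0) := by
    intro i hi
    rw [Finset.mem_range] at hi
    by_cases h : i = n - 1
    · rw [if_neg (show ¬(i + 1 < n) by omega), if_pos h]; ring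
    · rw [if_pos (show i + 1 < n by omega), if_neg h]; ring
  rw [Finset.sum_congr rfl hrw, Finset.sum_sub_distrib, Finset.sum_const, Finset.card_range,
    Finset.sum_ite_eq' (Finset.range n) (n - 1), if_pos (Finset.mem_range.2 (by omega))]
  simp only [nsmul_eq_mul]
  ring

private lemma sum_if_ge (x : ℝ) (n : ℕ) (hn : 1 ≤ n) :
    (∑ i ∈ Finset.range n, if 1 ≤ i then x else 0) = ((n : ℝ) - 1) * x := by
  have hrw : ∀ i ∈ Finset.range n, (if 1 ≤ i then x else 0)
      = x - (if i = 0 then x else 0) := by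
    intro i _
    by_cases h : i = 0
    · rw [if_neg (show ¬(1 ≤ i) by omega), if_pos h]; ring
    · rw [if_pos (show 1 ≤ i by omega), if_neg h]; ring
  rw [Finset.sum_congr rfl hrw, Finset.sum_sub_distrib, Finset.sum_const, Finset.card_range,
    Finset.sum_ite_eq' (Finset.range n) 0, if_pos (Finset.mem_range.2 (by omega))]
  simp only [nsmul_eq_mul]
  ring

/-- For the Kac–Murdock–Szegő matrices `A_{ij} = a^|i-j|`,
`B_{ij} = b^|i-j|` with `b² ≠ 1`, the matrix `B` is invertible and
`tr(B⁻¹ A) = ((n-2) b² - 2 (n-1) a b + n)/(1 - b²)`. -/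
theorem trace_kms_inv_mul_kms (a b : ℝ) (hb : b ^ 2 ≠ 1) (n : ℕ) (hn : 1 ≤ n)
    (A B : Matrix (Fin n) (Fin n) ℝ)
    (hA : ∀ i j : Fin n, A i j = a ^ Nat.dist (i : ℕ) (j : ℕ))
    (hB : ∀ i j : Fin n, B i j = b ^ Nat.dist (i : ℕ) (j : ℕ)) :
    IsUnit B ∧
      (B⁻¹ * A).trace =
        (((n : ℝ) - 2) * b ^ 2 - 2 * ((n : ℝ) - 1) * a * b + n) / (1 - b ^ 2) := by
  have h1 : (1 : ℝ) - b ^ 2 ≠ 0 := fun h => hb (by linarith)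
  rcases eq_or_lt_of_le hn with hn1 | hn2
  · -- n = 1
    have hB1 : B = 1 := by
      ext i j
      have : i = j := by omega
      subst this
      rw [hB, Nat.dist_self, pow_zero, Matrix.one_apply_eq]
    refine ⟨hB1 ▸ isUnit_one, ?_⟩
    rw [hB1, inv_one, one_mul]
    have : A.trace = ∑ i : Fin n, a ^ Nat.dist (i : ℕ) (i : ℕ) := by
      unfold Matrix.trace Matrix.diag
      exact Finset.sum_congr rfl fun i _ => hA i i
    rw [this]
    simp only [Nat.dist_self, pow_zero, Finset.sum_const, Finset.card_univ, Fintype.card_fin,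
      nsmul_eq_mul, mul_one]
    rw [← hn1]
    push_cast
    rw [eq_div_iff h1]
    ring
  · have hn2' : 2 ≤ n := hn2
    set C : Matrix (Fin n) (Fin n) ℝ :=
      Matrix.of fun k j : Fin n => (1 - b ^ 2)⁻¹ * cnum b n (k : ℕ) (j : ℕ) with hC
    have hBC : B * C = 1 := by
      ext i j
      rw [Matrix.mul_apply, Matrix.one_apply]
      have : ∀ k : Fin n, B i k * C k j
          = (1 - b ^ 2)⁻¹ * (b ^ Nat.dist (i : ℕ) (k : ℕ) * cnum b n (k : ℕ) (j : ℕ)) := by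
        intro k
        rw [hB, hC]
        simp only [Matrix.of_apply]
        ring
      rw [Finset.sum_congr rfl fun k _ => this k, ← Finset.mul_sum]
      rw [Fin.sum_univ_eq_sum_range (fun k => b ^ Nat.dist (i : ℕ) k * cnum b n k (j : ℕ)) n]
      rw [key b n hn2' i j i.isLt j.isLt]
      by_cases hij : i = j
      · rw [if_pos (show (i : ℕ) = (j : ℕ) from congrArg _ hij), if_pos hij,
          inv_mul_cancel₀ h1]
      · rw [if_neg (show (i : ℕ) ≠ (j : ℕ) from fun h => hij (Fin.val_injective h)),
          if_neg hij, mul_zero]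
    refine ⟨IsUnit.of_mul_eq_one _ hBC, ?_⟩
    rw [Matrix.inv_eq_right_inv hBC]
    have htr : (C * A).trace
        = (1 - b ^ 2)⁻¹ * ∑ i ∈ Finset.range n,
            ∑ k ∈ Finset.range n, cnum b n i k * a ^ Nat.dist k i := by
      unfold Matrix.trace Matrix.diag
      rw [Finset.mul_sum]
      rw [← Fin.sum_univ_eq_sum_range (fun i =>
        (1 - b ^ 2)⁻¹ * ∑ k ∈ Finset.range n, cnum b n i k * a ^ Nat.dist k i) n]
      refine Finset.sum_congr rfl fun i _ => ?_
      rw [Matrix.mul_apply]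
      rw [← Fin.sum_univ_eq_sum_range (fun k => cnum b n (i : ℕ) k * a ^ Nat.dist k (i : ℕ)) n,
        Finset.mul_sum]
      refine Finset.sum_congr rfl fun k _ => ?_
      rw [hA, hC]
      simp only [Matrix.of_apply]
      ring
    rw [htr]
    have hsum : (∑ i ∈ Finset.range n, ∑ k ∈ Finset.range n, cnum b n i k * a ^ Nat.dist k i)
        = ((n : ℝ) - 2) * b ^ 2 - 2 * ((n : ℝ) - 1) * a * b + n := by
      have hcongr : ∀ i ∈ Finset.range n,
          (∑ k ∈ Finset.range n, cnum b n i k * a ^ Nat.dist k i)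
            = dval b n i + (if i + 1 < n then -(b * a) else 0)
              + (if 1 ≤ i then -(b * a) else 0) := fun i hi =>
        inner_tr a b n i (Finset.mem_range.1 hi)
      rw [Finset.sum_congr rfl hcongr]
      simp only [Finset.sum_add_distrib]
      rw [sum_dval b n hn2', sum_if_lt _ n hn, sum_if_ge _ n hn]
      ring
    rw [hsum, div_eq_inv_mul]
end

section
/- Let a ∈ ℝ and n ≥ 1. Let L be the n×n lower-triangular matrix with L_{ij} = a^{i−j} for i ≥ j and 0 otherwise, and let U be the n×n upper-triangular matrix with U_{ij} = a^{j−i}·(1 − a²)^{1 − 𝟙{i=1}} for j ≥ i and 0 otherwise (indices 1 ≤ i, j ≤ n; the exponent is 0 when i = 1 and 1 when i ≥ 2). Then L·U equals the matrix Â with entries Â_{ij} = a^{|i−j|}. -/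
open Matrix

lemma kms_key (a : ℝ) : ∀ i j : ℕ, i ≤ j →
    ∑ k ∈ Finset.range (i+1),
      a^(i-k) * (a^(j-k) * (1-a^2)^(if k = 0 then 0 else 1)) = a^(j-i) := by
  intro i
  induction i with
  | zero => intro j _; simp
  | succ i ih =>
    intro j hj
    rw [Finset.sum_range_succ]
    have h1 : ∑ k ∈ Finset.range (i+1), a^(i+1-k) * (a^(j-k) * (1-a^2)^(if k = 0 then 0 else 1))
        = a * ∑ k ∈ Finset.range (i+1), a^(i-k) * (a^(j-k) * (1-a^2)^(if k = 0 then 0 else 1)) := by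
      rw [Finset.mul_sum]
      refine Finset.sum_congr rfl fun k hk => ?_
      have hk' : k ≤ i := by simpa [Nat.lt_succ_iff] using Finset.mem_range.mp hk
      have : i + 1 - k = (i - k) + 1 := by omega
      rw [this, pow_succ]; ring
    rw [h1, ih j (by omega)]
    have h2 : j - i = (j - (i+1)) + 1 := by omega
    have h3 : i + 1 - (i + 1) = 0 := by omega
    simp only [Nat.succ_ne_zero, if_false, h3, pow_zero, pow_one, one_mul]
    rw [h2, pow_succ]
    ring

/-- LU decomposition of the Kac–Murdock–Szegő matrix:
with `L_{ij} = a^(i-j)` for `i ≥ j` (and `0` otherwise) and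
`U_{ij} = a^(j-i) (1-a²)^(1-𝟙{i=1})` for `j ≥ i` (and `0` otherwise),
`L U = Â` where `Â_{ij} = a^|i-j|`.  (Indices are 1-based in the paper;
`i : Fin n` is 0-based, so `i = 1` becomes `(i : ℕ) = 0`.) -/
theorem kms_lu_decomposition (a : ℝ) (n : ℕ) (hn : 1 ≤ n)
    (L U Ahat : Matrix (Fin n) (Fin n) ℝ)
    (hL : ∀ i j : Fin n, L i j =
      if (j : ℕ) ≤ (i : ℕ) then a ^ ((i : ℕ) - (j : ℕ)) else 0)
    (hU : ∀ i j : Fin n, U i j =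
      if (i : ℕ) ≤ (j : ℕ) then
        a ^ ((j : ℕ) - (i : ℕ)) * (1 - a ^ 2) ^ (if (i : ℕ) = 0 then 0 else 1) else 0)
    (hAhat : ∀ i j : Fin n, Ahat i j = a ^ Nat.dist (i : ℕ) (j : ℕ)) :
    L * U = Ahat := by
  ext i j
  rw [mul_apply, hAhat]
  set f : ℕ → ℝ := fun k =>
    (if k ≤ (i:ℕ) then a ^ ((i:ℕ) - k) else 0) *
    (if k ≤ (j:ℕ) then a ^ ((j:ℕ) - k) * (1 - a ^ 2) ^ (if k = 0 then 0 else 1) else 0)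
    with hf
  have h1 : ∑ k : Fin n, L i k * U k j = ∑ k ∈ Finset.range n, f k := by
    rw [← Fin.sum_univ_eq_sum_range]
    exact Finset.sum_congr rfl fun k _ => by rw [hL, hU, hf]
  rw [h1]
  set m := min (i:ℕ) (j:ℕ) with hm
  have hmn : m + 1 ≤ n := by
    have := i.isLt; have := j.isLt; omega
  have h2 : ∑ k ∈ Finset.range n, f k = ∑ k ∈ Finset.range (m+1), f k := by
    refine (Finset.sum_subset (Finset.range_subset_range.mpr hmn) fun k _ hk => ?_).symm
    have : ¬ (k ≤ (i:ℕ) ∧ k ≤ (j:ℕ)) := by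
      simp only [Finset.mem_range] at hk; omega
    rw [hf]
    by_cases h : k ≤ (i:ℕ)
    · have hj : ¬ k ≤ (j:ℕ) := fun hj => this ⟨h, hj⟩
      simp [h, hj]
    · simp [h]
  rw [h2]
  rcases le_total (i:ℕ) (j:ℕ) with h | h
  · have hmi : m = (i:ℕ) := by omega
    have hd : Nat.dist (i:ℕ) (j:ℕ) = (j:ℕ) - (i:ℕ) := Nat.dist_eq_sub_of_le h
    rw [hmi, hd, ← kms_key a (i:ℕ) (j:ℕ) h]
    refine Finset.sum_congr rfl fun k hk => ?_
    have hk' : k ≤ (i:ℕ) := by simpa [Nat.lt_succ_iff] using Finset.mem_range.mp hk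
    rw [hf]
    simp only [hk', if_true, hk'.trans h, if_true]
  · have hmj : m = (j:ℕ) := by omega
    have hd : Nat.dist (i:ℕ) (j:ℕ) = (i:ℕ) - (j:ℕ) := by
      rw [Nat.dist_comm]; exact Nat.dist_eq_sub_of_le h
    rw [hmj, hd, ← kms_key a (j:ℕ) (i:ℕ) h]
    refine Finset.sum_congr rfl fun k hk => ?_
    have hk' : k ≤ (j:ℕ) := by simpa [Nat.lt_succ_iff] using Finset.mem_range.mp hk
    rw [hf]
    simp only [hk', if_true, hk'.trans h, if_true]
    ring
end

section
/- Let a ∈ ℝ with a² ≠ 1, let n ≥ 2 and 1 ≤ τ ≤ n−1. Let Â_m denote the m×m matrix with entries a^{|i−j|}, let Σ be the n×n matrix Â_n, and let Σ̃ be the n×n block-diagonal matrix diag(Â_τ, Â_{n−τ}). Then Σ̃ is invertible and tr(Σ̃⁻¹·Σ) = n. Moreover, det Σ̃ / det Σ = 1/(1 − a²). -/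
open Matrix Finset

/-- The KMS matrix with entries `a^|i-j|`. -/
def kmsM (a : ℝ) (m : ℕ) : Matrix (Fin m) (Fin m) ℝ :=
  fun i j => a ^ Nat.dist (i : ℕ) (j : ℕ)

def kmsL (a : ℝ) (m : ℕ) : Matrix (Fin m) (Fin m) ℝ :=
  fun i j => if (j : ℕ) ≤ i then a ^ ((i : ℕ) - j) else 0

def kmsU (a : ℝ) (m : ℕ) : Matrix (Fin m) (Fin m) ℝ :=
  fun i j => if (i : ℕ) ≤ j then (if (i : ℕ) = 0 then 1 else 1 - a ^ 2) * a ^ ((j : ℕ) - i) else 0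

lemma kms_sum (a : ℝ) (i j : ℕ) (h : i ≤ j) :
    ∑ k ∈ Finset.range (i + 1),
      a ^ (i - k) * ((if k = 0 then (1:ℝ) else 1 - a ^ 2) * a ^ (j - k)) = a ^ (j - i) := by
  induction i with
  | zero => simp
  | succ i ih =>
    rw [Finset.sum_range_succ]
    have hij : i ≤ j := le_trans (Nat.le_succ i) h
    have h1 : ∑ k ∈ Finset.range (i + 1),
        a ^ (i + 1 - k) * ((if k = 0 then (1:ℝ) else 1 - a ^ 2) * a ^ (j - k))
        = a * a ^ (j - i) := by
      rw [← ih hij, Finset.mul_sum]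
      refine Finset.sum_congr rfl fun k hk => ?_
      have hk' : k ≤ i := Nat.lt_succ_iff.mp (Finset.mem_range.mp hk)
      have : i + 1 - k = (i - k) + 1 := by omega
      rw [this, pow_succ]
      ring
    rw [h1]
    have h2 : j - i = (j - (i + 1)) + 1 := by omega
    simp only [Nat.sub_self, pow_zero, if_neg (Nat.succ_ne_zero i), h2]
    ring

lemma kmsM_eq_LU (a : ℝ) (m : ℕ) : kmsM a m = kmsL a m * kmsU a m := by
  have key : ∀ i j : Fin m, (i : ℕ) ≤ (j : ℕ) →
      (kmsL a m * kmsU a m) i j = a ^ ((j : ℕ) - (i : ℕ)) := by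
    intro i j hij
    rw [mul_apply]
    set g : ℕ → ℝ := fun k =>
      (if k ≤ (i : ℕ) then a ^ ((i : ℕ) - k) else 0) *
      (if k ≤ (j : ℕ) then (if k = 0 then 1 else 1 - a ^ 2) * a ^ ((j : ℕ) - k) else 0) with hg
    have h0 : ∀ k : Fin m, kmsL a m i k * kmsU a m k j = g (k : ℕ) := fun k => rfl
    simp only [h0]
    rw [Fin.sum_univ_eq_sum_range g m]
    have hsub : Finset.range ((i : ℕ) + 1) ⊆ Finset.range m :=
      Finset.range_subset_range.mpr i.isLt
    rw [← Finset.sum_subset hsub (fun k _ hk => ?_)]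
    · rw [← kms_sum a i j hij]
      refine Finset.sum_congr rfl fun k hk => ?_
      have hk' : k ≤ (i : ℕ) := Nat.lt_succ_iff.mp (Finset.mem_range.mp hk)
      rw [hg]
      simp only [if_pos hk', if_pos (le_trans hk' hij)]
    · have : ¬ k ≤ (i : ℕ) := by
        simp only [Finset.mem_range, Nat.lt_succ_iff] at hk
        exact hk
      rw [hg]; simp [this]
  have symm : ∀ i j : Fin m, (kmsL a m * kmsU a m) i j = (kmsL a m * kmsU a m) j i := by
    intro i j
    rw [mul_apply, mul_apply]
    refine Finset.sum_congr rfl fun k _ => ?_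
    simp only [kmsL, kmsU]
    split_ifs <;> ring
  ext i j
  rcases le_total (i : ℕ) (j : ℕ) with hij | hij
  · rw [key i j hij, kmsM, Nat.dist_eq_sub_of_le hij]
  · rw [symm, key j i hij, kmsM, Nat.dist_eq_sub_of_le_right hij]

lemma det_kmsM (a : ℝ) (m : ℕ) : (kmsM a m).det = (1 - a ^ 2) ^ (m - 1) := by
  rw [kmsM_eq_LU, Matrix.det_mul]
  have hL : (kmsL a m).det = 1 := by
    rw [Matrix.det_of_lowerTriangular (kmsL a m) (fun i j h => ?_)]
    · exact Finset.prod_eq_one fun i _ => by simp [kmsL]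
    · have : ¬ (j : ℕ) ≤ (i : ℕ) := by
        simp only [OrderDual.toDual_lt_toDual] at h
        exact not_le.mpr (Fin.lt_iff_val_lt_val.mp h)
      simp [kmsL, this]
  have hU : (kmsU a m).det = (1 - a ^ 2) ^ (m - 1) := by
    rw [Matrix.det_of_upperTriangular (fun i j h => ?_)]
    · have hdiag : ∀ i : Fin m, kmsU a m i i =
          if (i : ℕ) = 0 then 1 else 1 - a ^ 2 := by
        intro i; simp [kmsU]
      simp only [hdiag]
      cases m with
      | zero => simp
      | succ s =>
        rw [Fin.prod_univ_succ]
        simp [Fin.val_succ]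
    · have : ¬ (i : ℕ) ≤ (j : ℕ) :=
        not_le.mpr (Fin.lt_iff_val_lt_val.mp h)
      simp [kmsU, this]
  rw [hL, hU, one_mul]

lemma trace_submatrix_equiv' {m n : Type*} [Fintype m] [Fintype n] [DecidableEq m]
    [DecidableEq n] (e : m ≃ n) (M : Matrix n n ℝ) : (M.submatrix e e).trace = M.trace := by
  rw [Matrix.trace, Matrix.trace]
  exact Fintype.sum_equiv e _ _ (fun i => rfl)

lemma trace_fromBlocks' {m n : Type*} [Fintype m] [Fintype n]
    (A : Matrix m m ℝ) (B : Matrix m n ℝ) (C : Matrix n m ℝ) (D : Matrix n n ℝ) :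
    (Matrix.fromBlocks A B C D).trace = A.trace + D.trace := by
  simp [Matrix.trace, Fintype.sum_sum_type, Matrix.diag]

/-- Let `Σ = Â_n` be the `n × n` Kac–Murdock–Szegő matrix
(`Σ_{ij} = a^|i-j|`) and let `Σ̃ = diag(Â_τ, Â_{n-τ})` be the block-diagonal
matrix corresponding to a reset after time `τ` (here entries are `a^|i-j|` when
`i, j` lie in the same block, `0` otherwise).  Then `Σ̃` is invertible,
`tr(Σ̃⁻¹ Σ) = n` and `det Σ̃ / det Σ = 1/(1 - a²)`. -/
theorem kms_block_reset (a : ℝ) (ha : a ^ 2 ≠ 1) (n τ : ℕ)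
    (hn : 2 ≤ n) (hτ1 : 1 ≤ τ) (hτ2 : τ ≤ n - 1)
    (S St : Matrix (Fin n) (Fin n) ℝ)
    (hS : ∀ i j : Fin n, S i j = a ^ Nat.dist (i : ℕ) (j : ℕ))
    (hSt : ∀ i j : Fin n, St i j =
      if ((i : ℕ) < τ ↔ (j : ℕ) < τ) then a ^ Nat.dist (i : ℕ) (j : ℕ) else 0) :
    IsUnit St ∧ (St⁻¹ * S).trace = n ∧ St.det / S.det = 1 / (1 - a ^ 2) := by
  have ha2 : (1 : ℝ) - a ^ 2 ≠ 0 := sub_ne_zero.mpr (Ne.symm ha)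
  set m₂ := n - τ with hm₂
  have hτn : τ + m₂ = n := by omega
  set e : Fin τ ⊕ Fin m₂ ≃ Fin n := finSumFinEquiv.trans (finCongr hτn) with he
  have hel : ∀ i : Fin τ, ((e (Sum.inl i)) : ℕ) = (i : ℕ) := by intro i; simp [he]
  have her : ∀ j : Fin m₂, ((e (Sum.inr j)) : ℕ) = τ + (j : ℕ) := by intro j; simp [he]
  set A := kmsM a τ with hAdef
  set B := kmsM a m₂ with hBdef
  have hA : IsUnit A.det := by
    rw [hAdef, det_kmsM]; exact (pow_ne_zero _ ha2).isUnit
  have hB : IsUnit B.det := by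
    rw [hBdef, det_kmsM]; exact (pow_ne_zero _ ha2).isUnit
  have hStblocks : ∀ p q, St (e p) (e q) = Matrix.fromBlocks A 0 0 B p q := by
    rintro (i | i) (j | j)
    · rw [hSt, hel i, hel j, if_pos (iff_of_true i.isLt j.isLt)]; rfl
    · rw [hSt, hel i, her j]
      simp only [Matrix.fromBlocks_apply₁₂, Matrix.zero_apply]
      rw [if_neg]; intro h; have := h.mp i.isLt; omega
    · rw [hSt, her i, hel j]
      simp only [Matrix.fromBlocks_apply₂₁, Matrix.zero_apply]
      rw [if_neg]; intro h; have := h.mpr j.isLt; omega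
    · rw [hSt, her i, her j, if_pos (iff_of_false (by omega) (by omega))]
      show a ^ Nat.dist (τ + (i : ℕ)) (τ + (j : ℕ)) = B i j
      rw [Nat.dist_add_add_left]; rfl
  have hSt' : St = (Matrix.fromBlocks A 0 0 B).submatrix ⇑e.symm ⇑e.symm := by
    ext i j
    have h := hStblocks (e.symm i) (e.symm j)
    rw [Equiv.apply_symm_apply, Equiv.apply_symm_apply] at h
    exact h
  have hdetSt : St.det = (1 - a ^ 2) ^ (n - 2) := by
    rw [hSt', Matrix.det_submatrix_equiv_self, Matrix.det_fromBlocks_zero₁₂,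
      hAdef, hBdef, det_kmsM, det_kmsM, ← pow_add]
    congr 1; omega
  have hS' : S = kmsM a n := by ext i j; rw [hS]; rfl
  have hdetS : S.det = (1 - a ^ 2) ^ (n - 1) := by rw [hS']; exact det_kmsM a n
  have hUnit : IsUnit St := by
    rw [Matrix.isUnit_iff_isUnit_det, hdetSt]; exact (pow_ne_zero _ ha2).isUnit
  refine ⟨hUnit, ?_, ?_⟩
  · set T := (Matrix.fromBlocks A⁻¹ 0 0 B⁻¹).submatrix ⇑e.symm ⇑e.symm with hT
    have hinvSt : St⁻¹ = T := by
      apply Matrix.inv_eq_right_inv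
      rw [hSt', hT, Matrix.submatrix_mul_equiv, Matrix.fromBlocks_multiply]
      simp only [Matrix.mul_nonsing_inv _ hA, Matrix.mul_nonsing_inv _ hB,
        Matrix.mul_zero, Matrix.zero_mul, add_zero, zero_add]
      rw [Matrix.fromBlocks_one, Matrix.submatrix_one_equiv]
    have hSsub : S = (S.submatrix ⇑e ⇑e).submatrix ⇑e.symm ⇑e.symm := by
      rw [Matrix.submatrix_submatrix, Equiv.self_comp_symm, Matrix.submatrix_id_id]
    rw [hinvSt, hT]
    conv_lhs => rw [hSsub]
    rw [Matrix.submatrix_mul_equiv, trace_submatrix_equiv']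
    have h11 : (S.submatrix ⇑e ⇑e).toBlocks₁₁ = A := by
      ext i j
      show S (e (Sum.inl i)) (e (Sum.inl j)) = A i j
      rw [hS, hel, hel]; rfl
    have h22 : (S.submatrix ⇑e ⇑e).toBlocks₂₂ = B := by
      ext i j
      show S (e (Sum.inr i)) (e (Sum.inr j)) = B i j
      rw [hS, her, her, Nat.dist_add_add_left]; rfl
    rw [← Matrix.fromBlocks_toBlocks (S.submatrix ⇑e ⇑e), h11, h22,
      Matrix.fromBlocks_multiply]
    rw [trace_fromBlocks']
    simp only [Matrix.zero_mul, Matrix.mul_zero, add_zero, zero_add,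
      Matrix.nonsing_inv_mul _ hA, Matrix.nonsing_inv_mul _ hB, Matrix.trace_one]
    rw [← hτn]
    push_cast
    simp [Fintype.card_fin]
  · rw [hdetSt, hdetS]
    have h2 : n - 1 = (n - 2) + 1 := by omega
    rw [h2, pow_succ (1 - a ^ 2) (n - 2), div_mul_eq_div_div, div_self (pow_ne_zero _ ha2)]
end

section
/- Let a, σ_Z, γ, c, δ, M ∈ ℝ with |a| > 1, σ_Z > 0, γ > 0, c > 0, 0 < δ < 1 and M ≥ (2c/δ)^{1/γ}. (i) For any real random variable X with E[|X|^γ] ≤ c, P(|X| > M) ≤ δ/2. (ii) Let Z₁, …, Z_{n₀} be i.i.d. N(0, σ_Z²) and S = Σ_{k=1}^{n₀} a^{n₀−k} Z_k, and let q > 0 satisfy P(G > q) = (1 − δ/2)/2 for G a standard Gaussian. If M·√(a² − 1) ≤ σ_Z·q·√(a^{2n₀} − 1), then P(|S| ≤ M) ≤ δ/2. Consequently, for Willie's test that declares 'controlled' when |X_{n₀}| ≤ M, the false-alarm probability α = P(|S| ≤ M) and the missed-detection probability β = P(|X_{n₀}| > M) under any control keeping E[|X_{n₀}|^γ] ≤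 c satisfy α + β ≤ δ, i.e. Willie achieves (1−δ)-detection. -/
open MeasureTheory ProbabilityTheory
open scoped ENNReal NNReal

section Aux
open Real

private lemma gauss_pdf_conv (v w : ℝ≥0) (hv : v ≠ 0) (hw : w ≠ 0) (y : ℝ) :
    ∫⁻ x, ENNReal.ofReal (gaussianPDFReal 0 v x) * ENNReal.ofReal (gaussianPDFReal 0 w (y - x))
      = ENNReal.ofReal (gaussianPDFReal 0 (v + w) y) := by
  have hv0 : (0:ℝ) < v := lt_of_le_of_ne v.2 (by exact_mod_cast (Ne.symm hv))
  have hw0 : (0:ℝ) < w := lt_of_le_of_ne w.2 (by exact_mod_cast (Ne.symm hw))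
  have hvw0 : (0:ℝ) < (v:ℝ) + w := by linarith
  have hπ := Real.pi_pos
  set b : ℝ := ((v:ℝ) + w) / (2 * v * w) with hb
  set m : ℝ := (v:ℝ) * y / ((v:ℝ) + w) with hm
  have hb0 : 0 < b := by positivity
  set K : ℝ := (Real.sqrt (2*π*v))⁻¹ * (Real.sqrt (2*π*w))⁻¹ * Real.exp (-y^2/(2*((v:ℝ)+w)))
    with hK
  have hK0 : 0 ≤ K := by positivity
  have hpt : ∀ x : ℝ, gaussianPDFReal 0 v x * gaussianPDFReal 0 w (y - x)
      = K * Real.exp (-b * (x - m)^2) := by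
    intro x
    have hexp : -(x - 0)^2/(2*(v:ℝ)) + (-(y - x - 0)^2/(2*(w:ℝ)))
        = -y^2/(2*((v:ℝ)+w)) + (-b * (x - m)^2) := by
      rw [hb, hm]
      field_simp
      ring
    simp only [gaussianPDFReal, hK]
    rw [show (Real.sqrt (2*π*(v:ℝ)))⁻¹ * rexp (-(x - 0)^2/(2*(v:ℝ)))
          * ((Real.sqrt (2*π*(w:ℝ)))⁻¹ * rexp (-(y - x - 0)^2/(2*(w:ℝ))))
        = (Real.sqrt (2*π*(v:ℝ)))⁻¹ * (Real.sqrt (2*π*(w:ℝ)))⁻¹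
          * (rexp (-(x - 0)^2/(2*(v:ℝ))) * rexp (-(y - x - 0)^2/(2*(w:ℝ)))) from by ring,
      ← Real.exp_add, hexp, Real.exp_add]
    ring
  have hint : Integrable (fun x : ℝ => K * Real.exp (-b * (x - m)^2)) := by
    exact ((integrable_exp_neg_mul_sq hb0).comp_sub_right m).const_mul K
  calc ∫⁻ x, ENNReal.ofReal (gaussianPDFReal 0 v x) * ENNReal.ofReal (gaussianPDFReal 0 w (y - x))
      = ∫⁻ x, ENNReal.ofReal (K * Real.exp (-b * (x - m)^2)) := by
        refine lintegral_congr fun x => ?_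
        rw [← ENNReal.ofReal_mul (gaussianPDFReal_nonneg _ _ _), hpt x]
    _ = ENNReal.ofReal (∫ x, K * Real.exp (-b * (x - m)^2)) := by
        rw [ofReal_integral_eq_lintegral_ofReal hint (ae_of_all _ fun x => by positivity)]
    _ = ENNReal.ofReal (K * Real.sqrt (π / b)) := by
        rw [MeasureTheory.integral_const_mul]
        congr 2
        have := MeasureTheory.integral_sub_right_eq_self (μ := volume)
          (fun x : ℝ => Real.exp (-b * x^2)) m
        rw [this, integral_gaussian]
    _ = ENNReal.ofReal (gaussianPDFReal 0 (v + w) y) := by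
        congr 1
        simp only [gaussianPDFReal, sub_zero, NNReal.coe_add]
        rw [hK, show (Real.sqrt (2*π*(v:ℝ)))⁻¹ * (Real.sqrt (2*π*(w:ℝ)))⁻¹
            * rexp (-y^2/(2*((v:ℝ)+w))) * Real.sqrt (π / b)
          = ((Real.sqrt (2*π*(v:ℝ)))⁻¹ * (Real.sqrt (2*π*(w:ℝ)))⁻¹ * Real.sqrt (π / b))
            * rexp (-y^2/(2*((v:ℝ)+w))) from by ring]
        congr 1
        rw [← Real.sqrt_inv, ← Real.sqrt_inv,
          ← Real.sqrt_mul (by positivity) _, ← Real.sqrt_mul (by positivity) _,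
          ← Real.sqrt_inv]
        congr 1
        rw [hb]
        field_simp

private lemma gauss_conv (v w : ℝ≥0) :
    Measure.map (fun p : ℝ × ℝ => p.1 + p.2) ((gaussianReal 0 v).prod (gaussianReal 0 w))
      = gaussianReal 0 (v + w) := by
  by_cases hv : v = 0
  · subst hv
    rw [gaussianReal_zero_var, Measure.dirac_prod, zero_add,
      Measure.map_map measurable_add (measurable_prodMk_left)]
    simp only [Function.comp_def, zero_add]
    exact Measure.map_id
  by_cases hw : w = 0
  · subst hw
    rw [gaussianReal_zero_var, Measure.prod_dirac, add_zero,
      Measure.map_map measurable_add (measurable_prodMk_right)]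
    simp only [Function.comp_def, add_zero]
    exact Measure.map_id
  have hjm : Measurable (fun p : ℝ × ℝ => gaussianPDF 0 v p.1 * gaussianPDF p.1 w p.2) := by
    unfold gaussianPDF gaussianPDFReal
    fun_prop
  ext s hs
  rw [Measure.map_apply measurable_add hs,
    Measure.prod_apply (measurable_add hs)]
  have hxfib : ∀ x : ℝ, (Prod.mk x ⁻¹' ((fun p : ℝ × ℝ => p.1 + p.2) ⁻¹' s))
      = (fun y => x + y) ⁻¹' s := by intro x; rfl
  calc ∫⁻ x, gaussianReal 0 w (Prod.mk x ⁻¹' ((fun p : ℝ × ℝ => p.1 + p.2) ⁻¹' s))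
        ∂(gaussianReal 0 v)
      = ∫⁻ x, (∫⁻ y in s, gaussianPDF x w y) ∂(gaussianReal 0 v) := by
        refine lintegral_congr fun x => ?_
        rw [hxfib x, ← Measure.map_apply (measurable_const_add x) hs,
          gaussianReal_map_const_add, zero_add, gaussianReal_apply _ hw]
    _ = ∫⁻ x, gaussianPDF 0 v x * (∫⁻ y in s, gaussianPDF x w y) := by
        rw [gaussianReal_of_var_ne_zero _ hv,
          lintegral_withDensity_eq_lintegral_mul _ (measurable_gaussianPDF _ _)]
        · rfl
        · have hjm2 : Measurable (fun p : ℝ × ℝ => gaussianPDF p.1 w p.2) := by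
            unfold gaussianPDF gaussianPDFReal
            fun_prop
          exact Measurable.lintegral_prod_right (f := fun x y => gaussianPDF x w y) hjm2
    _ = ∫⁻ x, ∫⁻ y in s, gaussianPDF 0 v x * gaussianPDF x w y := by
        refine lintegral_congr fun x => (lintegral_const_mul _ ?_).symm
        exact (measurable_gaussianPDF x w)
    _ = ∫⁻ y in s, ∫⁻ x, gaussianPDF 0 v x * gaussianPDF x w y := by
        apply lintegral_lintegral_swap
        exact hjm.aemeasurable
    _ = ∫⁻ y in s, gaussianPDF 0 (v + w) y := by
        refine lintegral_congr fun y => ?_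
        have hshift : ∀ x : ℝ, gaussianPDF x w y
            = ENNReal.ofReal (gaussianPDFReal 0 w (y - x)) := by
          intro x
          unfold gaussianPDF gaussianPDFReal
          norm_num
        simp_rw [hshift]
        exact gauss_pdf_conv v w hv hw y
    _ = gaussianReal 0 (v + w) s := (gaussianReal_apply _ (by simp [hv]) s).symm

private lemma gauss_add {Ω : Type*} [MeasurableSpace Ω] {P : Measure Ω} [IsProbabilityMeasure P]
    {X Y : Ω → ℝ} (hX : Measurable X) (hY : Measurable Y) (hind : IndepFun X Y P)
    {v w : ℝ≥0} (hXd : P.map X = gaussianReal 0 v) (hYd : P.map Y = gaussianReal 0 w) :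
    P.map (X + Y) = gaussianReal 0 (v + w) := by
  have hp := (indepFun_iff_map_prod_eq_prod_map_map hX.aemeasurable hY.aemeasurable).mp hind
  have hco : X + Y = (fun p : ℝ × ℝ => p.1 + p.2) ∘ (fun ω => (X ω, Y ω)) := rfl
  rw [hco, ← Measure.map_map measurable_add (hX.prodMk hY), hp, hXd, hYd, gauss_conv]

private lemma gauss_sum {Ω : Type*} [MeasurableSpace Ω] {P : Measure Ω} [IsProbabilityMeasure P]
    (Y : ℕ → Ω → ℝ) (hmeas : ∀ k, Measurable (Y k))
    (hind : iIndepFun Y P)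
    (v : ℕ → ℝ≥0) (hY : ∀ k, P.map (Y k) = gaussianReal 0 (v k)) (s : Finset ℕ) :
    P.map (∑ k ∈ s, Y k) = gaussianReal 0 (∑ k ∈ s, v k) := by
  classical
  induction s using Finset.induction_on with
  | empty =>
      simp only [Finset.sum_empty]
      rw [show (0 : Ω → ℝ) = fun _ => (0:ℝ) from rfl, Measure.map_const]
      simp
  | insert _ _ hj ih =>
      rename_i j t
      rw [Finset.sum_insert hj, Finset.sum_insert hj]
      have hfun : (∑ k ∈ t, Y k) = fun a => ∑ k ∈ t, Y k a := by
        ext a; simp [Finset.sum_apply]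
      have hsm : Measurable (∑ k ∈ t, Y k) := by
        rw [hfun]; exact t.measurable_sum fun i _ => hmeas i
      exact gauss_add (hmeas j) hsm
        ((hind.indepFun_finset_sum_of_notMem hmeas hj).symm) (hY j) ih

private lemma std_gauss_Icc {q : ℝ} (hq : 0 < q) :
    gaussianReal 0 1 (Set.Icc (-q) q)
      = 1 - (gaussianReal 0 1 (Set.Ioi q) + gaussianReal 0 1 (Set.Ioi q)) := by
  have hsym : gaussianReal 0 1 (Set.Iio (-q)) = gaussianReal 0 1 (Set.Ioi q) := by
    have hmap : (gaussianReal (0:ℝ) 1).map (fun x => (-1:ℝ) * x) = gaussianReal 0 1 := by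
      rw [show (fun x : ℝ => (-1:ℝ) * x) = ((-1:ℝ) * ·) from rfl, gaussianReal_map_const_mul]
      norm_num
    conv_lhs => rw [← hmap]
    rw [Measure.map_apply (measurable_const_mul _) measurableSet_Iio]
    congr 1
    ext x
    simp [neg_one_mul, lt_neg]
  have hc : Set.Icc (-q) q = (Set.Iio (-q) ∪ Set.Ioi q)ᶜ := by
    ext x
    simp only [Set.mem_Icc, Set.mem_compl_iff, Set.mem_union, Set.mem_Iio, Set.mem_Ioi]
    push_neg
    rfl
  have hdisj : Disjoint (Set.Iio (-q)) (Set.Ioi q) := by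
    rw [Set.disjoint_left]
    intro x hx hx'
    simp only [Set.mem_Iio] at hx
    simp only [Set.mem_Ioi] at hx'
    linarith
  rw [hc, prob_compl_eq_one_sub (measurableSet_Iio.union measurableSet_Ioi),
    measure_union hdisj measurableSet_Ioi, hsym]

end Aux

/-- Detecting stabilization of an unstable Gaussian AR(1) system, `|a| > 1`.
(i) Markov: if `E[|X|^γ] ≤ c` and `M ≥ (2c/δ)^(1/γ)`, then `P(|X| > M) ≤ δ/2`.
(ii) For `S = ∑_{k=1}^{n₀} a^(n₀-k) Z_k` with `Z_k` i.i.d. `N(0, σ_Z²)` and `q > 0` with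
`Q(q) = (1-δ/2)/2`, if `M √(a²-1) ≤ σ_Z q √(a^(2n₀)-1)` then `P(|S| ≤ M) ≤ δ/2`.
Consequently the test `|X_{n₀}| ≤ M` has `α + β ≤ δ`: Willie achieves `(1-δ)`-detection. -/
theorem unstable_ar1_detection {Ω : Type*} [MeasurableSpace Ω] (P : Measure Ω)
    [IsProbabilityMeasure P] (a σZ γ c δ M : ℝ)
    (ha : 1 < |a|) (hσ : 0 < σZ) (hγ : 0 < γ) (hc : 0 < c)
    (hδ0 : 0 < δ) (hδ1 : δ < 1) (hM : (2 * c / δ) ^ (1 / γ) ≤ M)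
    (n₀ : ℕ) (hn₀ : 1 ≤ n₀)
    (Z : ℕ → Ω → ℝ) (hZmeas : ∀ k, Measurable (Z k))
    (hZindep : iIndepFun Z P)
    (hZdist : ∀ k, Measure.map (Z k) P = gaussianReal 0 ((σZ ^ 2).toNNReal))
    (q : ℝ) (hq : 0 < q)
    (hq2 : gaussianReal 0 1 (Set.Ioi q) = ENNReal.ofReal ((1 - δ / 2) / 2)) :
    (∀ X : Ω → ℝ, AEMeasurable X P →
        (∫⁻ ω, ENNReal.ofReal (|X ω| ^ γ) ∂P) ≤ ENNReal.ofReal c →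
        P {ω | M < |X ω|} ≤ ENNReal.ofReal (δ / 2)) ∧
      (M * Real.sqrt (a ^ 2 - 1) ≤ σZ * q * Real.sqrt (a ^ (2 * n₀) - 1) →
        P {ω | |∑ k ∈ Finset.Icc 1 n₀, a ^ (n₀ - k) * Z k ω| ≤ M}
          ≤ ENNReal.ofReal (δ / 2)) ∧
      (∀ X : Ω → ℝ, AEMeasurable X P →
        (∫⁻ ω, ENNReal.ofReal (|X ω| ^ γ) ∂P) ≤ ENNReal.ofReal c →
        M * Real.sqrt (a ^ 2 - 1) ≤ σZ * q * Real.sqrt (a ^ (2 * n₀) - 1) →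
        P {ω | |∑ k ∈ Finset.Icc 1 n₀, a ^ (n₀ - k) * Z k ω| ≤ M} +
            P {ω | M < |X ω|} ≤ ENNReal.ofReal δ) := by
  -- Part (i): Markov's inequality
  have hpart1 : ∀ X : Ω → ℝ, AEMeasurable X P →
      (∫⁻ ω, ENNReal.ofReal (|X ω| ^ γ) ∂P) ≤ ENNReal.ofReal c →
      P {ω | M < |X ω|} ≤ ENNReal.ofReal (δ / 2) := by
    intro X hXm hXint
    have h2cδ : (0:ℝ) < 2 * c / δ := by positivity
    have hM0 : 0 < M := lt_of_lt_of_le (Real.rpow_pos_of_pos h2cδ _) hM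
    have hMγ : 2 * c / δ ≤ M ^ γ := by
      calc 2 * c / δ = ((2 * c / δ) ^ (1/γ)) ^ γ := by
            rw [← Real.rpow_mul h2cδ.le, one_div_mul_cancel hγ.ne', Real.rpow_one]
        _ ≤ M ^ γ := Real.rpow_le_rpow (Real.rpow_nonneg h2cδ.le _) hM hγ.le
    have hMγ0 : (0:ℝ) < M ^ γ := lt_of_lt_of_le h2cδ hMγ
    have hsub : {ω | M < |X ω|} ⊆ {ω | ENNReal.ofReal (M ^ γ) ≤ ENNReal.ofReal (|X ω| ^ γ)} := by
      intro ω hω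
      exact ENNReal.ofReal_le_ofReal (Real.rpow_le_rpow hM0.le (le_of_lt hω) hγ.le)
    have hrm : Measurable (fun x : ℝ => ENNReal.ofReal (|x| ^ γ)) := by
      apply Measurable.ennreal_ofReal
      exact (measurable_abs.pow_const γ)
    have hmarkov := mul_meas_ge_le_lintegral₀
      (μ := P) (f := fun ω => ENNReal.ofReal (|X ω| ^ γ))
      (hrm.comp_aemeasurable hXm) (ENNReal.ofReal (M ^ γ))
    have hP : P {ω | M < |X ω|} ≤ P {ω | ENNReal.ofReal (M ^ γ) ≤ ENNReal.ofReal (|X ω| ^ γ)} :=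
      measure_mono hsub
    have hle : ENNReal.ofReal (M ^ γ) * P {ω | M < |X ω|} ≤ ENNReal.ofReal c := by
      calc ENNReal.ofReal (M ^ γ) * P {ω | M < |X ω|}
          ≤ ENNReal.ofReal (M ^ γ)
            * P {ω | ENNReal.ofReal (M ^ γ) ≤ ENNReal.ofReal (|X ω| ^ γ)} := by
            exact mul_le_mul_right hP _
        _ ≤ ∫⁻ ω, ENNReal.ofReal (|X ω| ^ γ) ∂P := hmarkov
        _ ≤ ENNReal.ofReal c := hXint
    have hne0 : ENNReal.ofReal (M ^ γ) ≠ 0 := ne_of_gt (ENNReal.ofReal_pos.mpr hMγ0)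
    have hstep : P {ω | M < |X ω|} ≤ ENNReal.ofReal c / ENNReal.ofReal (M ^ γ) :=
      (ENNReal.le_div_iff_mul_le (Or.inl hne0) (Or.inl ENNReal.ofReal_ne_top)).mpr
        (by rwa [mul_comm])
    refine hstep.trans (ENNReal.div_le_of_le_mul ?_)
    rw [← ENNReal.ofReal_mul (by linarith)]
    apply ENNReal.ofReal_le_ofReal
    calc c = δ / 2 * (2 * c / δ) := by field_simp
      _ ≤ δ / 2 * M ^ γ := by nlinarith
  -- Part (ii)
  have hpart2 : M * Real.sqrt (a ^ 2 - 1) ≤ σZ * q * Real.sqrt (a ^ (2 * n₀) - 1) →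
      P {ω | |∑ k ∈ Finset.Icc 1 n₀, a ^ (n₀ - k) * Z k ω| ≤ M}
        ≤ ENNReal.ofReal (δ / 2) := by
    intro hMq
    have ha2 : (1:ℝ) < a ^ 2 := by nlinarith [sq_abs a]
    have h2n : (1:ℝ) < a ^ (2 * n₀) := by
      rw [pow_mul]; exact one_lt_pow₀ ha2 (by omega)
    set v0 : ℝ≥0 := (σZ ^ 2).toNNReal with hv0def
    have hσ2 : (v0 : ℝ) = σZ ^ 2 := Real.coe_toNNReal _ (sq_nonneg σZ)
    set Y : ℕ → Ω → ℝ := fun k ω => a ^ (n₀ - k) * Z k ω with hYdef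
    have hYmeas : ∀ k, Measurable (Y k) := fun k => (hZmeas k).const_mul _
    have hYind : iIndepFun Y P :=
      hZindep.comp (fun k x => a ^ (n₀ - k) * x) (fun k => measurable_const_mul _)
    set vk : ℕ → ℝ≥0 := fun k => ((a ^ (n₀ - k)) ^ 2).toNNReal * v0 with hvkdef
    have hYd : ∀ k, P.map (Y k) = gaussianReal 0 (vk k) := by
      intro k
      have hco : Y k = (fun x => a ^ (n₀ - k) * x) ∘ Z k := rfl
      rw [hco, ← Measure.map_map (measurable_const_mul _) (hZmeas k), hZdist k]
      rw [show (fun x : ℝ => a ^ (n₀ - k) * x) = ((a ^ (n₀ - k) : ℝ) * ·) from rfl,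
        gaussianReal_map_const_mul, mul_zero]
      congr 1
      apply NNReal.coe_injective
      simp only [hvkdef, NNReal.coe_mul, NNReal.coe_mk,
        Real.coe_toNNReal _ (sq_nonneg (a ^ (n₀ - k)))]
    set V : ℝ≥0 := ∑ k ∈ Finset.Icc 1 n₀, vk k with hVdef
    have hmap : P.map (fun ω => ∑ k ∈ Finset.Icc 1 n₀, a ^ (n₀ - k) * Z k ω)
        = gaussianReal 0 V := by
      have hfe : (fun ω => ∑ k ∈ Finset.Icc 1 n₀, a ^ (n₀ - k) * Z k ω)
          = ∑ k ∈ Finset.Icc 1 n₀, Y k := by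
        ext ω; simp [Finset.sum_apply, hYdef]
      rw [hfe]
      exact gauss_sum Y hYmeas hYind vk hYd _
    have hgeom : ∑ k ∈ Finset.Icc 1 n₀, ((a:ℝ) ^ 2) ^ (n₀ - k)
        = (a ^ (2 * n₀) - 1) / (a ^ 2 - 1) := by
      have hre : ∑ k ∈ Finset.Icc 1 n₀, ((a:ℝ) ^ 2) ^ (n₀ - k)
          = ∑ j ∈ Finset.range n₀, ((a:ℝ) ^ 2) ^ j := by
        refine Finset.sum_nbij' (fun k => n₀ - k) (fun j => n₀ - j) ?_ ?_ ?_ ?_ ?_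
        · intro k hk; simp only [Finset.mem_Icc] at hk; simp only [Finset.mem_range]; omega
        · intro j hj; simp only [Finset.mem_range] at hj; simp only [Finset.mem_Icc]; omega
        · intro k hk; simp only [Finset.mem_Icc] at hk; show n₀ - (n₀ - k) = k; omega
        · intro j hj; simp only [Finset.mem_range] at hj; show n₀ - (n₀ - j) = j; omega
        · intro k _; rfl
      rw [hre, geom_sum_eq (by nlinarith : ((a:ℝ) ^ 2) ≠ 1), ← pow_mul]
    have hVr : (V : ℝ) = σZ ^ 2 * ((a ^ (2 * n₀) - 1) / (a ^ 2 - 1)) := by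
      rw [hVdef, NNReal.coe_sum, ← hgeom, Finset.mul_sum]
      refine Finset.sum_congr rfl fun k _ => ?_
      have hcoe : ((vk k : ℝ)) = (a ^ (n₀ - k)) ^ 2 * σZ ^ 2 := by
        rw [hvkdef]
        push_cast [Real.coe_toNNReal _ (sq_nonneg (a ^ (n₀ - k))), hσ2]
        ring
      rw [hcoe, ← pow_mul, ← pow_mul, Nat.mul_comm]
      ring
    have hV0 : (0:ℝ) < V := by
      rw [hVr]
      apply mul_pos (by positivity)
      apply div_pos <;> linarith
    have hVne : V ≠ 0 := by
      intro h; rw [h] at hV0; simp at hV0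
    set σS : ℝ := Real.sqrt V with hσSdef
    have hσS : 0 < σS := Real.sqrt_pos.mpr hV0
    have hMr : M ≤ σS * q := by
      have h1 : (0:ℝ) < Real.sqrt (a ^ 2 - 1) := Real.sqrt_pos.mpr (by linarith)
      have hσSval : σS = σZ * Real.sqrt (a ^ (2 * n₀) - 1) / Real.sqrt (a ^ 2 - 1) := by
        rw [hσSdef, hVr, Real.sqrt_mul (sq_nonneg σZ), Real.sqrt_sq hσ.le,
          Real.sqrt_div (by linarith : (0:ℝ) ≤ a ^ (2 * n₀) - 1)]
        ring
      rw [hσSval, div_mul_eq_mul_div, le_div_iff₀ h1,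
        show σZ * Real.sqrt (a ^ (2 * n₀) - 1) * q = σZ * q * Real.sqrt (a ^ (2 * n₀) - 1)
          from by ring]
      exact hMq
    have hSmeas : Measurable (fun ω => ∑ k ∈ Finset.Icc 1 n₀, a ^ (n₀ - k) * Z k ω) :=
      Finset.measurable_sum _ fun i _ => (hZmeas i).const_mul _
    have hset : {ω | |∑ k ∈ Finset.Icc 1 n₀, a ^ (n₀ - k) * Z k ω| ≤ M}
        = (fun ω => ∑ k ∈ Finset.Icc 1 n₀, a ^ (n₀ - k) * Z k ω) ⁻¹' Set.Icc (-M) M := by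
      ext ω; simp [abs_le]
    rw [hset, ← Measure.map_apply hSmeas measurableSet_Icc, hmap]
    have hscale : gaussianReal 0 V (Set.Icc (-(σS * q)) (σS * q))
        = gaussianReal 0 1 (Set.Icc (-q) q) := by
      have hmapc : (gaussianReal (0:ℝ) 1).map (σS * ·) = gaussianReal 0 V := by
        rw [gaussianReal_map_const_mul, mul_zero]
        congr 1
        apply NNReal.coe_injective
        push_cast
        rw [hσSdef, Real.sq_sqrt hV0.le]
        ring
      rw [← hmapc, Measure.map_apply (measurable_const_mul σS) measurableSet_Icc]
      congr 1
      ext x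
      simp only [Set.mem_preimage, Set.mem_Icc]
      rw [show -(σS * q) = σS * (-q) from by ring, mul_le_mul_iff_right₀ hσS, mul_le_mul_iff_right₀ hσS]
    calc gaussianReal 0 V (Set.Icc (-M) M)
        ≤ gaussianReal 0 V (Set.Icc (-(σS * q)) (σS * q)) :=
          measure_mono (Set.Icc_subset_Icc (neg_le_neg hMr) hMr)
      _ = gaussianReal 0 1 (Set.Icc (-q) q) := hscale
      _ = 1 - (gaussianReal 0 1 (Set.Ioi q) + gaussianReal 0 1 (Set.Ioi q)) := std_gauss_Icc hq
      _ = ENNReal.ofReal (δ / 2) := by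
          rw [hq2, ← ENNReal.ofReal_add (by linarith) (by linarith),
            show (1 - δ/2)/2 + (1 - δ/2)/2 = 1 - δ/2 from by ring,
            ← ENNReal.ofReal_one, ← ENNReal.ofReal_sub _ (by linarith)]
          norm_num
  refine ⟨hpart1, hpart2, fun X hXm hXint hMq => ?_⟩
  calc P {ω | |∑ k ∈ Finset.Icc 1 n₀, a ^ (n₀ - k) * Z k ω| ≤ M} + P {ω | M < |X ω|}
      ≤ ENNReal.ofReal (δ / 2) + ENNReal.ofReal (δ / 2) :=
        add_le_add (hpart2 hMq) (hpart1 X hXm hXint)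
    _ = ENNReal.ofReal δ := by
        rw [← ENNReal.ofReal_add (by linarith) (by linarith)]
        norm_num
end

section
/- Let σ_v > 0, E_U > 0, 0 < δ < 1, K ≥ 1, and let u₁, …, u_K be real numbers with u_n² = E_U for every n. Let v₁, …, v_K be i.i.d. N(0, σ_v²). Define E_W⁰ = (1/K)·Σ_{n=1}^{K} v_n² and E_W¹ = (1/K)·Σ_{n=1}^{K} (u_n + v_n)², and set the threshold t = 2σ_v²/√(δK). Then the false-alarm probability α = P( E_W⁰ ≥ σ_v² + t ) satisfies α ≤ δ/2, and if K > K₀(δ) = (4/(δ·SNR²))·(1 + √(1 + 2·SNR))² with SNR = E_U/σ_v², then the missed-detection probability β = P( E_W¹ < σ_v² + t ) satisfies β ≤ δ/2; hence α + β ≤ δ, i.e. Willie achieves (1−δ)-detection. -/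
open MeasureTheory ProbabilityTheory Real Set
open scoped NNReal ENNReal

lemma integrable_pow_mul_exp {b : ℝ} (hb : 0 < b) (n : ℕ) :
    Integrable (fun x : ℝ => x ^ n * Real.exp (-b * x ^ 2)) := by
  have := integrable_rpow_mul_exp_neg_mul_sq hb (s := (n : ℝ)) (neg_one_lt_zero.trans_le (Nat.cast_nonneg n))
  simpa [Real.rpow_natCast] using this

lemma integral_pow_mul_exp_odd {b : ℝ} (hb : 0 < b) {n : ℕ} (hn : Odd n) :
    ∫ x : ℝ, x ^ n * Real.exp (-b * x ^ 2) = 0 := by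
  set f : ℝ → ℝ := fun x => x ^ n * Real.exp (-b * x ^ 2) with hf
  have hint := integrable_pow_mul_exp hb n
  have h1 : (∫ x in Iic (0:ℝ), f x) + ∫ x in Ioi (0:ℝ), f x = ∫ x, f x :=
    intervalIntegral.integral_Iic_add_Ioi hint.integrableOn hint.integrableOn
  have h2 : (∫ x in Iic (0:ℝ), f x) = - ∫ x in Ioi (0:ℝ), f x := by
    rw [show Iic (0:ℝ) = Iic (-0) by norm_num, ← integral_comp_neg_Ioi]
    rw [← integral_neg]
    refine setIntegral_congr_fun measurableSet_Ioi (fun x _ => ?_)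
    simp only [f, hn.neg_pow, neg_sq, neg_mul]
  linarith

lemma integral_pow_two_mul_exp {b : ℝ} (hb : 0 < b) :
    ∫ x : ℝ, x ^ 2 * Real.exp (-b * x ^ 2) = Real.sqrt π / (2 * b * Real.sqrt b) := by
  have h := integral_rpow_mul_exp_neg_mul_rpow (p := 2) (q := 2) (b := b) (by norm_num) (by norm_num) hb
  have heq : ∫ x : ℝ, x ^ 2 * Real.exp (-b * x ^ 2)
      = 2 * ∫ x in Ioi (0:ℝ), x ^ 2 * Real.exp (-b * x ^ 2) := by
    rw [← integral_comp_abs (f := fun x => x ^ 2 * Real.exp (-b * x ^ 2))]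
    congr 1 with x
    rw [sq_abs]
  have hΓ : Real.Gamma ((2 + 1) / 2) = Real.sqrt π / 2 := by
    rw [show ((2:ℝ) + 1) / 2 = 1/2 + 1 by norm_num, Real.Gamma_add_one (by norm_num),
      Real.Gamma_one_half_eq]
    ring
  have h2 : ∫ x in Ioi (0:ℝ), x ^ 2 * Real.exp (-b * x ^ 2)
      = b ^ (-(2 + 1) / 2 : ℝ) * (1 / 2) * (Real.sqrt π / 2) := by
    rw [← hΓ, ← h]
    refine setIntegral_congr_fun measurableSet_Ioi (fun x _ => ?_)
    norm_num [Real.rpow_natCast]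
  rw [heq, h2]
  have hbr : b ^ (-(2 + 1) / 2 : ℝ) = 1 / (b * Real.sqrt b) := by
    rw [show (-(2 + 1) / 2 : ℝ) = -(1 + 1/2) by norm_num, Real.rpow_neg hb.le,
      Real.rpow_add hb, Real.rpow_one, ← Real.sqrt_eq_rpow]
    field_simp
  rw [hbr]
  have : Real.sqrt b > 0 := Real.sqrt_pos.mpr hb
  field_simp

lemma integral_pow_four_mul_exp {b : ℝ} (hb : 0 < b) :
    ∫ x : ℝ, x ^ 4 * Real.exp (-b * x ^ 2) = 3 * Real.sqrt π / (4 * b ^ 2 * Real.sqrt b) := by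
  have h := integral_rpow_mul_exp_neg_mul_rpow (p := 2) (q := 4) (b := b) (by norm_num) (by norm_num) hb
  have heq : ∫ x : ℝ, x ^ 4 * Real.exp (-b * x ^ 2)
      = 2 * ∫ x in Ioi (0:ℝ), x ^ 4 * Real.exp (-b * x ^ 2) := by
    rw [← integral_comp_abs (f := fun x => x ^ 4 * Real.exp (-b * x ^ 2))]
    congr 1 with x
    rw [show |x| ^ 4 = (|x|^2)^2 by ring, sq_abs]
    ring_nf
  have hΓ : Real.Gamma ((4 + 1) / 2) = 3 * Real.sqrt π / 4 := by
    rw [show ((4:ℝ) + 1) / 2 = 3/2 + 1 by norm_num, Real.Gamma_add_one (by norm_num),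
      show (3/2 : ℝ) = 1/2 + 1 by norm_num, Real.Gamma_add_one (by norm_num),
      Real.Gamma_one_half_eq]
    ring
  have h2 : ∫ x in Ioi (0:ℝ), x ^ 4 * Real.exp (-b * x ^ 2)
      = b ^ (-(4 + 1) / 2 : ℝ) * (1 / 2) * (3 * Real.sqrt π / 4) := by
    rw [← hΓ, ← h]
    refine setIntegral_congr_fun measurableSet_Ioi (fun x _ => ?_)
    rw [show ((4:ℝ)) = ((4:ℕ):ℝ) by norm_num, Real.rpow_natCast]
    norm_num
  rw [heq, h2]
  have hbr : b ^ (-(4 + 1) / 2 : ℝ) = 1 / (b ^ 2 * Real.sqrt b) := by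
    rw [show (-(4 + 1) / 2 : ℝ) = -((2:ℕ) + 1/2) by norm_num, Real.rpow_neg hb.le,
      Real.rpow_add hb, Real.rpow_natCast, ← Real.sqrt_eq_rpow]
    field_simp
  rw [hbr]
  have : Real.sqrt b > 0 := Real.sqrt_pos.mpr hb
  field_simp

lemma integral_gaussianReal_eq {v : ℝ≥0} (hv : v ≠ 0) (g : ℝ → ℝ) :
    ∫ x, g x ∂(gaussianReal 0 v) = ∫ x, gaussianPDFReal 0 v x * g x := by
  rw [gaussianReal_of_var_ne_zero _ hv]
  have hpdf : gaussianPDF 0 v = fun x => ((gaussianPDFReal 0 v x).toNNReal : ℝ≥0∞) := rfl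
  rw [hpdf, integral_withDensity_eq_integral_smul
    (measurable_gaussianPDFReal 0 v).real_toNNReal g]
  congr 1 with x
  simp [NNReal.smul_def, Real.coe_toNNReal _ (gaussianPDFReal_nonneg 0 v x)]

lemma integrable_gaussianReal_iff {v : ℝ≥0} (hv : v ≠ 0) (g : ℝ → ℝ) :
    Integrable g (gaussianReal 0 v) ↔
      Integrable (fun x => gaussianPDFReal 0 v x * g x) volume := by
  rw [gaussianReal_of_var_ne_zero _ hv]
  have hpdf : gaussianPDF 0 v = fun x => ((gaussianPDFReal 0 v x).toNNReal : ℝ≥0∞) := rfl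
  rw [hpdf, integrable_withDensity_iff_integrable_smul
    (measurable_gaussianPDFReal 0 v).real_toNNReal]
  apply integrable_congr
  filter_upwards with x
  simp [NNReal.smul_def, Real.coe_toNNReal _ (gaussianPDFReal_nonneg 0 v x)]

section moments
variable {σ : ℝ} (hσ : 0 < σ)

lemma pdf_mul_eq (hσ : 0 < σ) (g : ℝ → ℝ) (x : ℝ) :
    gaussianPDFReal 0 ((σ^2).toNNReal) x * g x
      = (Real.sqrt π * Real.sqrt (2*σ^2))⁻¹ *
        (g x * Real.exp (-(2*σ^2)⁻¹ * x ^ 2)) := by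
  have h2 : ((σ^2).toNNReal : ℝ) = σ^2 := Real.coe_toNNReal _ (sq_nonneg σ)
  rw [gaussianPDFReal]
  rw [h2]
  rw [show 2 * π * σ^2 = π * (2*σ^2) by ring, Real.sqrt_mul pi_pos.le]
  rw [show -(x - 0)^2/(2*σ^2) = -(2*σ^2)⁻¹ * x^2 by field_simp; ring]
  ring

include hσ

lemma hv_ne : ((σ^2).toNNReal) ≠ 0 := by
  simp only [ne_eq, Real.toNNReal_eq_zero, not_le]
  positivity

lemma integrable_monomial (n : ℕ) :
    Integrable (fun x => x ^ n) (gaussianReal 0 ((σ^2).toNNReal)) := by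
  rw [integrable_gaussianReal_iff (hv_ne hσ)]
  have hb : (0:ℝ) < (2*σ^2)⁻¹ := by positivity
  have := ((integrable_pow_mul_exp hb n).const_mul
    (Real.sqrt π * Real.sqrt (2*σ^2))⁻¹)
  apply this.congr
  filter_upwards with x
  exact (pdf_mul_eq hσ _ x).symm

lemma integral_monomial_odd {n : ℕ} (hn : Odd n) :
    ∫ x, x ^ n ∂(gaussianReal 0 ((σ^2).toNNReal)) = 0 := by
  rw [integral_gaussianReal_eq (hv_ne hσ)]
  rw [show (fun x => gaussianPDFReal 0 ((σ^2).toNNReal) x * x ^ n)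
      = fun x : ℝ => (Real.sqrt π * Real.sqrt (2*σ^2))⁻¹ *
        (x ^ n * Real.exp (-(2*σ^2)⁻¹ * x ^ 2)) from funext (pdf_mul_eq hσ _)]
  rw [integral_const_mul, integral_pow_mul_exp_odd (by positivity) hn, mul_zero]

lemma sqrt_facts : Real.sqrt (2*σ^2) * Real.sqrt (2*σ^2) = 2*σ^2 :=
  Real.mul_self_sqrt (by positivity)

lemma integral_monomial_two :
    ∫ x, x ^ 2 ∂(gaussianReal 0 ((σ^2).toNNReal)) = σ^2 := by
  rw [integral_gaussianReal_eq (hv_ne hσ)]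
  rw [show (fun x => gaussianPDFReal 0 ((σ^2).toNNReal) x * x ^ 2)
      = fun x : ℝ => (Real.sqrt π * Real.sqrt (2*σ^2))⁻¹ *
        (x ^ 2 * Real.exp (-(2*σ^2)⁻¹ * x ^ 2)) from funext (pdf_mul_eq hσ _)]
  have hb : (0:ℝ) < (2*σ^2)⁻¹ := by positivity
  rw [integral_const_mul, integral_pow_two_mul_exp hb]
  have h1 : Real.sqrt ((2*σ^2)⁻¹) = (Real.sqrt (2*σ^2))⁻¹ := Real.sqrt_inv _
  have h2 := sqrt_facts hσ
  have h3 : (0:ℝ) < Real.sqrt (2*σ^2) := Real.sqrt_pos.mpr (by positivity)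
  have h4 : (0:ℝ) < Real.sqrt π := Real.sqrt_pos.mpr pi_pos
  rw [h1]
  field_simp

lemma integral_monomial_four :
    ∫ x, x ^ 4 ∂(gaussianReal 0 ((σ^2).toNNReal)) = 3*σ^4 := by
  rw [integral_gaussianReal_eq (hv_ne hσ)]
  rw [show (fun x => gaussianPDFReal 0 ((σ^2).toNNReal) x * x ^ 4)
      = fun x : ℝ => (Real.sqrt π * Real.sqrt (2*σ^2))⁻¹ *
        (x ^ 4 * Real.exp (-(2*σ^2)⁻¹ * x ^ 2)) from funext (pdf_mul_eq hσ _)]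
  have hb : (0:ℝ) < (2*σ^2)⁻¹ := by positivity
  rw [integral_const_mul, integral_pow_four_mul_exp hb]
  have h1 : Real.sqrt ((2*σ^2)⁻¹) = (Real.sqrt (2*σ^2))⁻¹ := Real.sqrt_inv _
  have h2 := sqrt_facts hσ
  have h3 : (0:ℝ) < Real.sqrt (2*σ^2) := Real.sqrt_pos.mpr (by positivity)
  have h4 : (0:ℝ) < Real.sqrt π := Real.sqrt_pos.mpr pi_pos
  rw [h1]
  field_simp
  nlinarith [h2, sq_nonneg σ, sq_nonneg (σ*σ)]

end moments

section shift
variable {σ : ℝ} (hσ : 0 < σ) (c : ℝ)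
include hσ

lemma integrable_shift_sq :
    Integrable (fun x => (c + x)^2) (gaussianReal 0 ((σ^2).toNNReal)) := by
  have : (fun x : ℝ => (c + x)^2)
      = fun x : ℝ => (2*c)*x^1 + (x^2 + c^2) := by funext x; ring
  rw [this]
  exact (((integrable_monomial hσ 1).const_mul _).add
    ((integrable_monomial hσ 2).add (integrable_const _)))

lemma integrable_shift_four :
    Integrable (fun x => (c + x)^4) (gaussianReal 0 ((σ^2).toNNReal)) := by
  have : (fun x : ℝ => (c + x)^4)
      = fun x : ℝ => (4*c)*x^3 + ((6*c^2)*x^2 + ((4*c^3)*x^1 + (x^4 + c^4))) := by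
    funext x; ring
  rw [this]
  exact ((integrable_monomial hσ 3).const_mul _).add
    (((integrable_monomial hσ 2).const_mul _).add
      (((integrable_monomial hσ 1).const_mul _).add
        ((integrable_monomial hσ 4).add (integrable_const _))))

lemma integral_shift_sq :
    ∫ x, (c + x)^2 ∂(gaussianReal 0 ((σ^2).toNNReal)) = c^2 + σ^2 := by
  have h : (fun x : ℝ => (c + x)^2)
      = fun x : ℝ => (2*c)*x^1 + (x^2 + c^2) := by funext x; ring
  have I1 : Integrable (fun x : ℝ => 2*c*x^1) (gaussianReal 0 ((σ^2).toNNReal)) :=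
    (integrable_monomial hσ 1).const_mul _
  have I2 : Integrable (fun x : ℝ => x^2 + c^2) (gaussianReal 0 ((σ^2).toNNReal)) :=
    (integrable_monomial hσ 2).add (integrable_const _)
  rw [h, integral_add I1 I2,
    integral_add (integrable_monomial hσ 2) (integrable_const _),
    integral_const_mul, integral_monomial_odd hσ (by decide : Odd 1),
    integral_monomial_two hσ, integral_const]
  simp [measure_univ]
  ring

lemma integral_shift_four :
    ∫ x, (c + x)^4 ∂(gaussianReal 0 ((σ^2).toNNReal))
      = c^4 + 6*c^2*σ^2 + 3*σ^4 := by
  have h : (fun x : ℝ => (c + x)^4)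
      = fun x : ℝ => (4*c)*x^3 + ((6*c^2)*x^2 + ((4*c^3)*x^1 + (x^4 + c^4))) := by
    funext x; ring
  have J4 : Integrable (fun x : ℝ => x^4 + c^4) (gaussianReal 0 ((σ^2).toNNReal)) :=
    (integrable_monomial hσ 4).add (integrable_const _)
  have J3 : Integrable (fun x : ℝ => 4*c^3*x^1 + (x^4 + c^4))
      (gaussianReal 0 ((σ^2).toNNReal)) := ((integrable_monomial hσ 1).const_mul _).add J4
  have J2 : Integrable (fun x : ℝ => 6*c^2*x^2 + (4*c^3*x^1 + (x^4 + c^4)))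
      (gaussianReal 0 ((σ^2).toNNReal)) := ((integrable_monomial hσ 2).const_mul _).add J3
  have J1 : Integrable (fun x : ℝ => 4*c*x^3) (gaussianReal 0 ((σ^2).toNNReal)) :=
    (integrable_monomial hσ 3).const_mul _
  rw [h, integral_add J1 J2,
    integral_add ((integrable_monomial hσ 2).const_mul _) J3,
    integral_add ((integrable_monomial hσ 1).const_mul _) J4,
    integral_add ((integrable_monomial hσ 4)) (integrable_const _),
    integral_const_mul, integral_const_mul, integral_const_mul,
    integral_monomial_odd hσ (by decide : Odd 3),
    integral_monomial_odd hσ (by decide : Odd 1),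
    integral_monomial_two hσ, integral_monomial_four hσ, integral_const]
  simp [measure_univ]
  ring

end shift

lemma rv_key {Ω : Type*} [MeasurableSpace Ω] (P : Measure Ω) [IsProbabilityMeasure P]
    {σ : ℝ} (hσ : 0 < σ) (c : ℝ) {X : Ω → ℝ} (hX : Measurable X)
    (hd : Measure.map X P = gaussianReal 0 ((σ^2).toNNReal)) :
    MemLp (fun ω => (c + X ω)^2) 2 P ∧
    ∫ ω, (c + X ω)^2 ∂P = c^2 + σ^2 ∧
    variance (fun ω => (c + X ω)^2) P = 2*σ^4 + 4*c^2*σ^2 := by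
  have hint : ∀ (g : ℝ → ℝ), Measurable g →
      ∫ ω, g (X ω) ∂P = ∫ x, g x ∂(gaussianReal 0 ((σ^2).toNNReal)) := by
    intro g hg
    rw [← hd, integral_map hX.aemeasurable hg.aestronglyMeasurable]
  have hintg : ∀ (g : ℝ → ℝ), Measurable g →
      Integrable g (gaussianReal 0 ((σ^2).toNNReal)) →
      Integrable (fun ω => g (X ω)) P := by
    intro g hg hgi
    rw [← hd] at hgi
    exact (integrable_map_measure hg.aestronglyMeasurable hX.aemeasurable).mp hgi
  have hmeas2 : Measurable (fun x : ℝ => (c + x)^2) :=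
    (measurable_id.const_add c).pow_const 2
  have hmeas4 : Measurable (fun x : ℝ => (c + x)^4) :=
    (measurable_id.const_add c).pow_const 4
  have hi4 : Integrable (fun ω => (c + X ω)^4) P :=
    hintg _ hmeas4 (integrable_shift_four hσ c)
  have hasm : AEStronglyMeasurable (fun ω => (c + X ω)^2) P :=
    (hmeas2.comp hX).aestronglyMeasurable
  have hmem : MemLp (fun ω => (c + X ω)^2) 2 P := by
    rw [memLp_two_iff_integrable_sq hasm]
    have h2 : (fun x => ((c + X x)^2)^2) = fun ω => (c + X ω)^4 := by
      funext ω; ring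
    rw [h2]
    exact hi4
  have hesq : ∫ ω, (c + X ω)^2 ∂P = c^2 + σ^2 := by
    rw [hint _ hmeas2, integral_shift_sq hσ c]
  refine ⟨hmem, hesq, ?_⟩
  rw [variance_eq_sub hmem]
  have h1 : (fun ω => (c + X ω)^2)^2 = fun ω => (c + X ω)^4 := by
    funext ω; simp [Pi.pow_apply]; ring
  calc (∫ ω, ((fun ω => (c + X ω)^2)^2) ω ∂P) - (∫ ω, (c + X ω)^2 ∂P)^2
      = (∫ ω, (c + X ω)^4 ∂P) - (c^2 + σ^2)^2 := by rw [h1, hesq]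
    _ = (c^4 + 6*c^2*σ^2 + 3*σ^4) - (c^2 + σ^2)^2 := by
        rw [hint _ hmeas4, integral_shift_four hσ c]
    _ = 2*σ^4 + 4*c^2*σ^2 := by ring

lemma cheb_sum {Ω : Type*} [MeasurableSpace Ω] (P : Measure Ω) [IsProbabilityMeasure P]
    (K : ℕ) (X : ℕ → Ω → ℝ) (m Vr : ℝ)
    (hmem : ∀ i ∈ Finset.Icc 1 K, MemLp (X i) 2 P)
    (hmean : ∀ i ∈ Finset.Icc 1 K, ∫ ω, X i ω ∂P = m)
    (hvar : ∀ i ∈ Finset.Icc 1 K, variance (X i) P = Vr)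
    (hindep : Set.Pairwise ↑(Finset.Icc 1 K) fun i j => IndepFun (X i) (X j) P)
    (c : ℝ) (hc : 0 < c) :
    P {ω | c ≤ |(∑ i ∈ Finset.Icc 1 K, X i ω) - K * m|}
      ≤ ENNReal.ofReal (K * Vr / c ^ 2) := by
  set s := Finset.Icc 1 K with hs
  have hcard : (s.card : ℝ) = K := by
    rw [hs, Nat.card_Icc]; simp
  have hSmem : MemLp (∑ i ∈ s, X i) 2 P := memLp_finset_sum' s hmem
  have hSint : ∫ ω, (∑ i ∈ s, X i) ω ∂P = K * m := by
    have h1 : ∫ ω, (∑ i ∈ s, X i) ω ∂P = ∑ i ∈ s, ∫ ω, X i ω ∂P := by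
      simp only [Finset.sum_apply]
      exact integral_finset_sum s (fun i hi => ((hmem i hi).integrable one_le_two))
    rw [h1, Finset.sum_congr rfl hmean, Finset.sum_const, nsmul_eq_mul, hcard]
  have hSvar : variance (∑ i ∈ s, X i) P = K * Vr := by
    rw [IndepFun.variance_sum hmem hindep, Finset.sum_congr rfl hvar,
      Finset.sum_const, nsmul_eq_mul, hcard]
  have := meas_ge_le_variance_div_sq hSmem hc
  rw [hSvar, hSint] at this
  convert this using 3
  simp [Finset.sum_apply]

lemma real_sqrt_pos_of {x : ℝ} (hx : 0 < x) : 0 < Real.sqrt x := Real.sqrt_pos.mpr hx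

/-- Energy detection of the one-bit controller through an AWGN channel:
with per-sample control energy `u_n² = E_U`, i.i.d. noise `v_n ~ N(0, σ_v²)`, threshold
`t = 2σ_v²/√(δK)`, the false alarm `α = P((1/K)∑v_n² ≥ σ_v² + t)` satisfies `α ≤ δ/2`, and
if `K > K₀(δ) = (4/(δ·SNR²))(1 + √(1+2·SNR))²` with `SNR = E_U/σ_v²` then the missed
detection `β = P((1/K)∑(u_n+v_n)² < σ_v² + t)` satisfies `β ≤ δ/2`; hence `α + β ≤ δ`,
i.e. Willie achieves `(1-δ)`-detection. -/
theorem one_bit_awgn_detection {Ω : Type*} [MeasurableSpace Ω] (P : Measure Ω)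
    [IsProbabilityMeasure P] (σv EU δ : ℝ) (hσ : 0 < σv) (hE : 0 < EU)
    (hδ0 : 0 < δ) (hδ1 : δ < 1) (K : ℕ) (hK : 1 ≤ K)
    (u : ℕ → ℝ) (hu : ∀ n ∈ Finset.Icc 1 K, u n ^ 2 = EU)
    (v : ℕ → Ω → ℝ) (hvmeas : ∀ n, Measurable (v n))
    (hvindep : iIndepFun v P)
    (hvdist : ∀ n, Measure.map (v n) P = gaussianReal 0 ((σv ^ 2).toNNReal)) :
    P {ω | σv ^ 2 + 2 * σv ^ 2 / Real.sqrt (δ * K) ≤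
        (1 / K) * ∑ n ∈ Finset.Icc 1 K, v n ω ^ 2} ≤ ENNReal.ofReal (δ / 2) ∧
      (4 / (δ * (EU / σv ^ 2) ^ 2) * (1 + Real.sqrt (1 + 2 * (EU / σv ^ 2))) ^ 2 < (K : ℝ) →
        P {ω | (1 / K) * ∑ n ∈ Finset.Icc 1 K, (u n + v n ω) ^ 2 <
            σv ^ 2 + 2 * σv ^ 2 / Real.sqrt (δ * K)} ≤ ENNReal.ofReal (δ / 2)) ∧
      (4 / (δ * (EU / σv ^ 2) ^ 2) * (1 + Real.sqrt (1 + 2 * (EU / σv ^ 2))) ^ 2 < (K : ℝ) →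
        P {ω | σv ^ 2 + 2 * σv ^ 2 / Real.sqrt (δ * K) ≤
            (1 / K) * ∑ n ∈ Finset.Icc 1 K, v n ω ^ 2} +
          P {ω | (1 / K) * ∑ n ∈ Finset.Icc 1 K, (u n + v n ω) ^ 2 <
            σv ^ 2 + 2 * σv ^ 2 / Real.sqrt (δ * K)} ≤ ENNReal.ofReal δ) := by
  have hKpos : (0:ℝ) < K := by exact_mod_cast Nat.lt_of_lt_of_le Nat.zero_lt_one hK
  have hδK : 0 < δ * K := by positivity
  set s0 : ℝ := Real.sqrt (δ * K) with hs0
  have hs0pos : 0 < s0 := Real.sqrt_pos.mpr hδK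
  have hs0sq : s0 ^ 2 = δ * K := Real.sq_sqrt hδK.le
  set t : ℝ := 2 * σv ^ 2 / s0 with ht
  have htpos : 0 < t := by positivity
  -- α part
  have hα : P {ω | σv ^ 2 + t ≤ (1 / K) * ∑ n ∈ Finset.Icc 1 K, v n ω ^ 2}
      ≤ ENNReal.ofReal (δ / 2) := by
    have hXa : ∀ i, MemLp (fun ω => v i ω ^ 2) 2 P ∧
        (∫ ω, v i ω ^ 2 ∂P) = σv ^ 2 ∧
        variance (fun ω => v i ω ^ 2) P = 2 * σv ^ 4 := by
      intro i
      have h := rv_key P hσ 0 (hvmeas i) (hvdist i)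
      simpa using h
    have hindep : Set.Pairwise ↑(Finset.Icc 1 K)
        fun i j => IndepFun (fun ω => v i ω ^ 2) (fun ω => v j ω ^ 2) P := by
      intro i _ j _ hij
      exact (hvindep.indepFun hij).comp (measurable_id.pow_const 2)
        (measurable_id.pow_const 2)
    have hcheb := cheb_sum P K (fun i ω => v i ω ^ 2) (σv ^ 2) (2 * σv ^ 4)
      (fun i _ => (hXa i).1) (fun i _ => (hXa i).2.1) (fun i _ => (hXa i).2.2)
      hindep (K * t) (by positivity)
    have hsub : {ω | σv ^ 2 + t ≤ (1 / K) * ∑ n ∈ Finset.Icc 1 K, v n ω ^ 2}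
        ⊆ {ω | K * t ≤ |(∑ i ∈ Finset.Icc 1 K, v i ω ^ 2) - K * σv ^ 2|} := by
      intro ω hω
      simp only [Set.mem_setOf_eq] at hω ⊢
      have h1 : (K : ℝ) * (σv ^ 2 + t) ≤ ∑ n ∈ Finset.Icc 1 K, v n ω ^ 2 := by
        have := mul_le_mul_of_nonneg_left hω hKpos.le
        rwa [← mul_assoc, mul_one_div_cancel hKpos.ne', one_mul] at this
      exact le_trans (by nlinarith) (le_abs_self _)
    refine le_trans (le_trans (measure_mono hsub) hcheb) ?_
    apply le_of_eq
    congr 1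
    have ht2 : t ^ 2 = 4 * σv ^ 4 / (δ * K) := by
      rw [ht, div_pow, hs0sq]; ring
    rw [mul_pow, ht2]
    field_simp
    ring
  have hβ : 4 / (δ * (EU / σv ^ 2) ^ 2) * (1 + Real.sqrt (1 + 2 * (EU / σv ^ 2))) ^ 2 < (K : ℝ) →
      P {ω | (1 / K) * ∑ n ∈ Finset.Icc 1 K, (u n + v n ω) ^ 2 < σv ^ 2 + t}
        ≤ ENNReal.ofReal (δ / 2) := by
    intro hlt
    set R := Real.sqrt (1 + 2 * (EU / σv ^ 2)) with hR
    have hRnonneg : 0 ≤ R := Real.sqrt_nonneg _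
    have hR2 : R ^ 2 = 1 + 2 * (EU / σv ^ 2) := Real.sq_sqrt (by positivity)
    have hD2 : (2 * σv ^ 2 * (1 + R) / EU) ^ 2 < δ * K := by
      have h := (mul_lt_mul_iff_right₀ hδ0).mpr hlt
      calc (2 * σv ^ 2 * (1 + R) / EU) ^ 2
          = δ * (4 / (δ * (EU / σv ^ 2) ^ 2) * (1 + R) ^ 2) := by
            field_simp
            ring
        _ < δ * K := h
    have hDpos : 0 < 2 * σv ^ 2 * (1 + R) / EU := by positivity
    have hDs : 2 * σv ^ 2 * (1 + R) / EU < s0 := by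
      rw [hs0]
      exact (Real.lt_sqrt hDpos.le).mpr hD2
    have hkey1 : 2 * σv ^ 2 * (1 + R) < s0 * EU := by
      have := (div_lt_iff₀ hE).mp hDs
      linarith [this]
    have hEt : 0 < EU - t := by
      have h2 : 2 * σv ^ 2 < EU * s0 := by nlinarith [hkey1, hRnonneg, sq_nonneg σv]
      have : t < EU := by
        rw [ht, div_lt_iff₀ hs0pos]
        linarith
      linarith
    have hs0Et : s0 * (EU - t) = s0 * EU - 2 * σv ^ 2 := by
      rw [ht]
      field_simp
    have hkey : 2 * (2 * σv ^ 4 + 4 * EU * σv ^ 2) ≤ δ * K * (EU - t) ^ 2 := by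
      have h1 : δ * K * (EU - t) ^ 2 = (s0 * (EU - t)) ^ 2 := by rw [← hs0sq]; ring
      rw [h1, hs0Et]
      have h2 : 2 * σv ^ 2 * R ≤ s0 * EU - 2 * σv ^ 2 := by nlinarith [hkey1]
      have h3 : (2 * σv ^ 2 * R) ^ 2 = 2 * (2 * σv ^ 4 + 4 * EU * σv ^ 2) := by
        have : (2 * σv ^ 2 * R) ^ 2 = 4 * σv ^ 4 * R ^ 2 := by ring
        rw [this, hR2]
        field_simp
        ring
      calc 2 * (2 * σv ^ 4 + 4 * EU * σv ^ 2) = (2 * σv ^ 2 * R) ^ 2 := h3.symm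
        _ ≤ (s0 * EU - 2 * σv ^ 2) ^ 2 := pow_le_pow_left₀ (by positivity) h2 2
    have hXb : ∀ i ∈ Finset.Icc 1 K, MemLp (fun ω => (u i + v i ω) ^ 2) 2 P ∧
        (∫ ω, (u i + v i ω) ^ 2 ∂P) = EU + σv ^ 2 ∧
        variance (fun ω => (u i + v i ω) ^ 2) P = 2 * σv ^ 4 + 4 * EU * σv ^ 2 := by
      intro i hi
      have h := rv_key P hσ (u i) (hvmeas i) (hvdist i)
      refine ⟨h.1, ?_, ?_⟩
      · rw [h.2.1, hu i hi]
      · rw [h.2.2, hu i hi]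
    have hindep : Set.Pairwise ↑(Finset.Icc 1 K)
        fun i j => IndepFun (fun ω => (u i + v i ω) ^ 2) (fun ω => (u j + v j ω) ^ 2) P := by
      intro i _ j _ hij
      exact (hvindep.indepFun hij).comp ((measurable_id.const_add (u i)).pow_const 2)
        ((measurable_id.const_add (u j)).pow_const 2)
    have hcheb := cheb_sum P K (fun i ω => (u i + v i ω) ^ 2) (EU + σv ^ 2)
      (2 * σv ^ 4 + 4 * EU * σv ^ 2)
      (fun i hi => (hXb i hi).1) (fun i hi => (hXb i hi).2.1) (fun i hi => (hXb i hi).2.2)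
      hindep (K * (EU - t)) (by positivity)
    have hsub : {ω | (1 / K) * ∑ n ∈ Finset.Icc 1 K, (u n + v n ω) ^ 2 < σv ^ 2 + t}
        ⊆ {ω | K * (EU - t) ≤
            |(∑ i ∈ Finset.Icc 1 K, (u i + v i ω) ^ 2) - K * (EU + σv ^ 2)|} := by
      intro ω hω
      simp only [Set.mem_setOf_eq] at hω ⊢
      have h1 : ∑ n ∈ Finset.Icc 1 K, (u n + v n ω) ^ 2 < (K : ℝ) * (σv ^ 2 + t) := by
        have := mul_lt_mul_of_pos_left hω hKpos
        rwa [← mul_assoc, mul_one_div_cancel hKpos.ne', one_mul] at this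
      refine le_trans ?_ (neg_le_abs _)
      have h2 : (K : ℝ) * (σv ^ 2 + t) = K * (EU + σv ^ 2) - K * (EU - t) := by ring
      linarith
    refine le_trans (le_trans (measure_mono hsub) hcheb) ?_
    apply ENNReal.ofReal_le_ofReal
    rw [mul_pow, div_le_iff₀ (by positivity)]
    have hfin := mul_le_mul_of_nonneg_left hkey (by positivity : (0:ℝ) ≤ (K : ℝ) / 2)
    linarith [hfin]
  refine ⟨hα, hβ, fun hlt => ?_⟩
  calc P {ω | σv ^ 2 + t ≤ (1 / K) * ∑ n ∈ Finset.Icc 1 K, v n ω ^ 2}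
        + P {ω | (1 / K) * ∑ n ∈ Finset.Icc 1 K, (u n + v n ω) ^ 2 < σv ^ 2 + t}
      ≤ ENNReal.ofReal (δ / 2) + ENNReal.ofReal (δ / 2) := add_le_add hα (hβ hlt)
    _ = ENNReal.ofReal δ := by
        rw [← ENNReal.ofReal_add (by positivity) (by positivity)]
        norm_num
end

section
/- Let σ_Z > 0, 0 < δ < 1, and let q > 0 satisfy P(G > q) = (1 − δ/2)/2 where G is a standard Gaussian. Let a ∈ ℝ with |a| < 1 and a² ≥ 1 − q²/(2·log(2/δ)). Set the threshold t = σ_Z²·q²/(1 − a²). Then for X₀ ~ N(0, σ_Z²/(1 − a²)) and X₁ ~ N(0, σ_Z²), the error probabilities of the test that declares 'controlled' when the observed value x satisfies x² ≤ t obey α = P( X₀² ≤ t ) ≤ δ/2 and β = P( X₁² > t ) ≤ δ/2; hence α + β ≤ δ, i.e. Willie achieves (1−δ)-detection. -/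
open MeasureTheory ProbabilityTheory
open scoped ENNReal

open Real
open scoped NNReal

lemma gauss_neg_symm : (gaussianReal 0 1).map (fun x : ℝ => -x) = gaussianReal 0 1 := by
  have h := gaussianReal_map_const_mul (μ := 0) (v := 1) (-1)
  have h1 : (⟨(-1:ℝ)^2, sq_nonneg _⟩ : ℝ≥0) * 1 = 1 := by ext; norm_num
  simp only [mul_zero, h1, neg_one_mul] at h
  convert h using 2
  ext; norm_num

lemma gauss_Iio_neg (r : ℝ) : gaussianReal 0 1 (Set.Iio (-r)) = gaussianReal 0 1 (Set.Ioi r) := by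
  conv_lhs => rw [← gauss_neg_symm]
  rw [Measure.map_apply measurable_neg measurableSet_Iio]
  congr 1
  ext x
  simp

lemma gauss_half : gaussianReal 0 1 (Set.Ioi (0:ℝ)) = 1/2 := by
  have hs : gaussianReal 0 1 {(0:ℝ)} = 0 :=
    (gaussianReal_absolutelyContinuous 0 one_ne_zero) (measure_singleton 0)
  have hsym := gauss_Iio_neg 0
  rw [neg_zero] at hsym
  have hIci : gaussianReal 0 1 (Set.Ici (0:ℝ)) = gaussianReal 0 1 (Set.Ioi 0) := by
    apply le_antisymm
    · have : Set.Ici (0:ℝ) ⊆ Set.Ioi 0 ∪ {0} := by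
        intro x hx
        rcases eq_or_lt_of_le (Set.mem_Ici.mp hx) with h|h
        · exact Or.inr (by simp [← h])
        · exact Or.inl h
      calc gaussianReal 0 1 (Set.Ici (0:ℝ)) ≤ gaussianReal 0 1 (Set.Ioi 0 ∪ {0}) :=
            measure_mono this
        _ ≤ gaussianReal 0 1 (Set.Ioi 0) + gaussianReal 0 1 {0} := measure_union_le _ _
        _ = gaussianReal 0 1 (Set.Ioi 0) := by rw [hs, add_zero]
    · exact measure_mono Set.Ioi_subset_Ici_self
  have htot : gaussianReal 0 1 (Set.Iio (0:ℝ)) + gaussianReal 0 1 (Set.Ici 0) = 1 := by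
    rw [← measure_union (by simp [Set.disjoint_left]) measurableSet_Ici,
      Set.Iio_union_Ici, measure_univ]
  rw [hIci, hsym, ← two_mul] at htot
  rw [ENNReal.eq_div_iff two_ne_zero ENNReal.ofNat_ne_top]
  exact htot

lemma gauss_tail (r : ℝ) (hr : 0 ≤ r) :
    gaussianReal 0 1 (Set.Ioi r) ≤ ENNReal.ofReal (Real.exp (-r^2/2) / 2) := by
  have hpt : ∀ x ∈ Set.Ioi r, gaussianPDF 0 1 x
      ≤ ENNReal.ofReal (Real.exp (-r^2/2)) * gaussianPDF r 1 x := by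
    intro x hx
    rw [gaussianPDF, gaussianPDF, ← ENNReal.ofReal_mul (Real.exp_nonneg _)]
    apply ENNReal.ofReal_le_ofReal
    unfold gaussianPDFReal
    simp only [NNReal.coe_one, mul_one, sub_zero]
    rw [mul_comm (Real.exp _), mul_assoc, ← Real.exp_add]
    apply mul_le_mul_of_nonneg_left _ (by positivity)
    apply Real.exp_le_exp.mpr
    have hxr : r ≤ x := le_of_lt hx
    nlinarith [mul_nonneg hr (sub_nonneg.mpr hxr)]
  calc gaussianReal 0 1 (Set.Ioi r) = ∫⁻ x in Set.Ioi r, gaussianPDF 0 1 x :=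
        gaussianReal_apply 0 one_ne_zero _
    _ ≤ ∫⁻ x in Set.Ioi r, ENNReal.ofReal (Real.exp (-r^2/2)) * gaussianPDF r 1 x :=
        setLIntegral_mono ((measurable_gaussianPDF r 1).const_mul _) hpt
    _ = ENNReal.ofReal (Real.exp (-r^2/2)) * ∫⁻ x in Set.Ioi r, gaussianPDF r 1 x :=
        lintegral_const_mul _ (measurable_gaussianPDF r 1)
    _ = ENNReal.ofReal (Real.exp (-r^2/2)) * gaussianReal r 1 (Set.Ioi r) := by
        rw [gaussianReal_apply r one_ne_zero]
    _ = ENNReal.ofReal (Real.exp (-r^2/2)) * (1/2) := by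
        congr 1
        have : gaussianReal r 1 = (gaussianReal 0 1).map (· + r) := by
          rw [gaussianReal_map_add_const, zero_add]
        rw [this, Measure.map_apply (measurable_add_const r) measurableSet_Ioi]
        have : (· + r) ⁻¹' Set.Ioi r = Set.Ioi (0:ℝ) := by ext x; simp
        rw [this, gauss_half]
    _ ≤ ENNReal.ofReal (Real.exp (-r^2/2) / 2) := by
        rw [ENNReal.ofReal_div_of_pos two_pos, ENNReal.ofReal_ofNat, one_div,
          div_eq_mul_inv]
        exact le_of_eq rfl

set_option maxHeartbeats 1000000

/-- Converse for the threshold (reset) controller: Willie observes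
`X_{τ+1}`, which is `N(0, σ_Z²/(1-a²))` if no reset occurred and `N(0, σ_Z²)` if the system
was reset.  With `q = Q⁻¹((1-δ/2)/2)`, `a² ≥ 1 - q²/(2 log(2/δ))`, `|a| < 1`, and threshold
`t = σ_Z² q²/(1-a²)`, the test declaring `controlled` when `x² ≤ t` has
`α = P(X₀² ≤ t) ≤ δ/2` and `β = P(X₁² > t) ≤ δ/2`, hence `α + β ≤ δ`:
Willie achieves `(1-δ)`-detection. -/
theorem threshold_controller_converse (σZ δ q a : ℝ) (hσ : 0 < σZ)
    (hδ0 : 0 < δ) (hδ1 : δ < 1) (hq : 0 < q)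
    (hq2 : gaussianReal 0 1 (Set.Ioi q) = ENNReal.ofReal ((1 - δ / 2) / 2))
    (ha1 : |a| < 1) (ha2 : 1 - q ^ 2 / (2 * Real.log (2 / δ)) ≤ a ^ 2) :
    gaussianReal 0 ((σZ ^ 2 / (1 - a ^ 2)).toNNReal)
        {x : ℝ | x ^ 2 ≤ σZ ^ 2 * q ^ 2 / (1 - a ^ 2)} ≤ ENNReal.ofReal (δ / 2) ∧
      gaussianReal 0 ((σZ ^ 2).toNNReal)
        {x : ℝ | σZ ^ 2 * q ^ 2 / (1 - a ^ 2) < x ^ 2} ≤ ENNReal.ofReal (δ / 2) ∧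
      gaussianReal 0 ((σZ ^ 2 / (1 - a ^ 2)).toNNReal)
          {x : ℝ | x ^ 2 ≤ σZ ^ 2 * q ^ 2 / (1 - a ^ 2)} +
        gaussianReal 0 ((σZ ^ 2).toNNReal)
          {x : ℝ | σZ ^ 2 * q ^ 2 / (1 - a ^ 2) < x ^ 2} ≤ ENNReal.ofReal δ := by
  
  have ha : a ^ 2 < 1 := by nlinarith [abs_nonneg a, sq_abs a]
  have h1a : 0 < 1 - a ^ 2 := by linarith
  set t : ℝ := σZ ^ 2 * q ^ 2 / (1 - a ^ 2) with ht_def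
  -- variance of X₀ and its square root
  set s : ℝ := σZ ^ 2 / (1 - a ^ 2) with hs_def
  have hs : 0 < s := by positivity
  set c : ℝ := Real.sqrt s with hc_def
  have hc2 : c ^ 2 = s := Real.sq_sqrt hs.le
  have ht : t = s * q ^ 2 := by rw [ht_def, hs_def]; ring
  -- α part
  have hmapα : gaussianReal 0 (s.toNNReal) = (gaussianReal 0 1).map (c * ·) := by
    rw [gaussianReal_map_const_mul, mul_zero]
    congr 1
    apply NNReal.coe_injective
    push_cast
    rw [Real.coe_toNNReal _ hs.le, mul_one]
    exact hc2.symm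
  have hAmeas : MeasurableSet {x : ℝ | x ^ 2 ≤ t} :=
    (isClosed_le (continuous_pow 2) continuous_const).measurableSet
  have hApre : (c * ·) ⁻¹' {x : ℝ | x ^ 2 ≤ t} = Set.Icc (-q) q := by
    ext x
    simp only [Set.mem_preimage, Set.mem_setOf_eq, Set.mem_Icc]
    rw [mul_pow, hc2, ht]
    constructor
    · intro h
      have hx2 : x ^ 2 ≤ q ^ 2 := le_of_mul_le_mul_left (by linarith) hs
      exact ⟨by nlinarith [sq_nonneg (x + q)], by nlinarith [sq_nonneg (x - q)]⟩
    · rintro ⟨h1, h2⟩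
      have : x ^ 2 ≤ q ^ 2 := by nlinarith
      exact mul_le_mul_of_nonneg_left this hs.le
  have hαeq : gaussianReal 0 (s.toNNReal) {x : ℝ | x ^ 2 ≤ t} = ENNReal.ofReal (δ / 2) := by
    rw [hmapα, Measure.map_apply (measurable_const_mul c) hAmeas, hApre]
    have hIcc : Set.Icc (-q) q = (Set.Iio (-q) ∪ Set.Ioi q)ᶜ := by
      rw [Set.compl_union, Set.compl_Iio, Set.compl_Ioi, Set.Ici_inter_Iic]
    rw [hIcc, prob_compl_eq_one_sub (measurableSet_Iio.union measurableSet_Ioi),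
      measure_union (by simp [Set.disjoint_left]; intro x hx; linarith) measurableSet_Ioi,
      gauss_Iio_neg, hq2, ← ENNReal.ofReal_add (by linarith) (by linarith)]
    rw [← ENNReal.ofReal_one, ← ENNReal.ofReal_sub _ (by linarith)]
    norm_num
  -- β part
  set r : ℝ := q / Real.sqrt (1 - a ^ 2) with hr_def
  have hr : 0 < r := div_pos hq (Real.sqrt_pos.mpr h1a)
  have hr2 : r ^ 2 = q ^ 2 / (1 - a ^ 2) := by
    rw [hr_def, div_pow, Real.sq_sqrt h1a.le]
  have ht2 : t = σZ ^ 2 * r ^ 2 := by rw [ht_def, hr2]; ring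
  have hmapβ : gaussianReal 0 ((σZ ^ 2).toNNReal) = (gaussianReal 0 1).map (σZ * ·) := by
    rw [gaussianReal_map_const_mul, mul_zero]
    congr 1
    apply NNReal.coe_injective
    push_cast
    rw [Real.coe_toNNReal _ (sq_nonneg σZ), mul_one]
  have hBmeas : MeasurableSet {x : ℝ | t < x ^ 2} :=
    (isOpen_lt continuous_const (continuous_pow 2)).measurableSet
  have hBpre : (σZ * ·) ⁻¹' {x : ℝ | t < x ^ 2} = Set.Iio (-r) ∪ Set.Ioi r := by
    ext x
    simp only [Set.mem_preimage, Set.mem_setOf_eq, Set.mem_union, Set.mem_Iio, Set.mem_Ioi]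
    rw [mul_pow, ht2]
    have hσ2 : 0 < σZ ^ 2 := by positivity
    constructor
    · intro h
      have hx2 : r ^ 2 < x ^ 2 := lt_of_mul_lt_mul_left (by linarith) hσ2.le
      by_contra hcon
      push_neg at hcon
      nlinarith [hcon.1, hcon.2]
    · rintro (h | h)
      · have : r ^ 2 < x ^ 2 := by nlinarith
        exact (mul_lt_mul_iff_right₀ hσ2).mpr this
      · have : r ^ 2 < x ^ 2 := by nlinarith
        exact (mul_lt_mul_iff_right₀ hσ2).mpr this
  -- exp bound
  have hL : 0 < Real.log (2 / δ) := Real.log_pos (by rw [lt_div_iff₀ hδ0]; linarith)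
  have hexp : Real.exp (-r ^ 2 / 2) ≤ δ / 2 := by
    have h1 : 1 - a ^ 2 ≤ q ^ 2 / (2 * Real.log (2 / δ)) := by linarith
    have h2 : 2 * Real.log (2 / δ) ≤ r ^ 2 := by
      rw [hr2, le_div_iff₀ h1a]
      rw [le_div_iff₀ (by positivity)] at h1
      linarith
    have h3 : Real.exp (-r ^ 2 / 2) ≤ Real.exp (-Real.log (2 / δ)) := by
      apply Real.exp_le_exp.mpr; linarith
    calc Real.exp (-r ^ 2 / 2) ≤ Real.exp (-Real.log (2 / δ)) := h3
      _ = (2 / δ)⁻¹ := by rw [Real.exp_neg, Real.exp_log (by positivity)]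
      _ = δ / 2 := by rw [inv_div]
  have hβle : gaussianReal 0 ((σZ ^ 2).toNNReal) {x : ℝ | t < x ^ 2}
      ≤ ENNReal.ofReal (δ / 2) := by
    rw [hmapβ, Measure.map_apply (measurable_const_mul σZ) hBmeas, hBpre,
      measure_union (by simp [Set.disjoint_left]; intro x hx; linarith) measurableSet_Ioi,
      gauss_Iio_neg]
    calc gaussianReal 0 1 (Set.Ioi r) + gaussianReal 0 1 (Set.Ioi r)
        ≤ ENNReal.ofReal (Real.exp (-r ^ 2 / 2) / 2) + ENNReal.ofReal (Real.exp (-r ^ 2 / 2) / 2) :=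
          add_le_add (gauss_tail r hr.le) (gauss_tail r hr.le)
      _ = ENNReal.ofReal (Real.exp (-r ^ 2 / 2)) := by
          rw [← ENNReal.ofReal_add (by positivity) (by positivity)]
          norm_num
      _ ≤ ENNReal.ofReal (δ / 2) := ENNReal.ofReal_le_ofReal hexp
  refine ⟨le_of_eq hαeq, hβle, ?_⟩
  calc gaussianReal 0 (s.toNNReal) {x : ℝ | x ^ 2 ≤ t}
        + gaussianReal 0 ((σZ ^ 2).toNNReal) {x : ℝ | t < x ^ 2}
      ≤ ENNReal.ofReal (δ / 2) + ENNReal.ofReal (δ / 2) :=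
        add_le_add (le_of_eq hαeq) hβle
    _ = ENNReal.ofReal δ := by
        rw [← ENNReal.ofReal_add (by linarith) (by linarith)]
        norm_num
end
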